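/- If λ₀ > 0 (the bottom of the spectrum of L^{0,α} is strictly positive) and the unkilled diffusion is recurrent, i.e. ∫₀^∞ ρ(x)⁻¹ dx = ∞, then the speed measure is finite: ∫₀^∞ ρ(x) dx < ∞. -/

import Mathlib

open MeasureTheory Filter Set Topology
open scoped ENNReal NNReal

noncomputable section

namespace KS

/-- The density `ρ(x) = exp(2∫₀ˣ b(s) ds)` of the speed measure `Γ = ρ·dx` on `(0,∞)`. -/
def rho (b : ℝ → ℝ) (x : ℝ) : ℝ := Real.exp (2 * ∫ s in (0:ℝ)..x, b s)

/-- `∫_{A ∩ (0,∞)} f dΓ`: the integral of `f` over `A` against the speed measure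
`Γ = ρ(x)dx` on `(0,∞)`. -/
def gInt (b : ℝ → ℝ) (A : Set ℝ) (f : ℝ → ℝ) : ℝ :=
  ∫ x in A ∩ Set.Ioi (0:ℝ), f x * rho b x

/-- Standing regularity assumptions on the drift `b` and the killing rate `κ`:
`b ∈ L¹_loc([0,∞)) ∩ C((0,∞))` and `0 ≤ κ ∈ C([0,∞))`. -/
structure Coeffs (b κ : ℝ → ℝ) : Prop where
  hb_cont : ContinuousOn b (Set.Ioi 0)
  hb_loc : LocallyIntegrableOn b (Set.Ici 0) volume
  hk_cont : ContinuousOn κ (Set.Ici 0)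
  hk_nonneg : ∀ x, 0 ≤ κ x

/-- The boundary point `0` is regular: `∫₀¹ ρ < ∞` and `∫₀¹ ρ⁻¹ < ∞`. -/
def RegularZero (b : ℝ → ℝ) : Prop :=
  IntegrableOn (fun x => rho b x) (Set.Ioc 0 1) volume ∧
  IntegrableOn (fun x => (rho b x)⁻¹) (Set.Ioc 0 1) volume

/-- The boundary point `∞` is accessible: `∫₁^∞ ρ(y)⁻¹ ∫₁^y ρ(z) dz dy < ∞`. -/
def AccessibleInfty (b : ℝ → ℝ) : Prop :=
  IntegrableOn (fun y => (rho b y)⁻¹ * ∫ z in Set.Ioc 1 y, rho b z) (Set.Ioi 1) volume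

/-- The boundary point `∞` is inaccessible. -/
def InaccessibleInfty (b : ℝ → ℝ) : Prop := ¬ AccessibleInfty b

/-- `∞` is a natural boundary:
`∫₁^∞ ρ(y)∫₁^y ρ(z)⁻¹ dz dy = ∞` and `∫₁^∞ ρ(y)⁻¹∫₁^y ρ(z) dz dy = ∞`. -/
def NaturalInfty (b : ℝ → ℝ) : Prop :=
  (¬ IntegrableOn (fun y => rho b y * ∫ z in Set.Ioc 1 y, (rho b z)⁻¹) (Set.Ioi 1) volume) ∧
  (¬ IntegrableOn (fun y => (rho b y)⁻¹ * ∫ z in Set.Ioc 1 y, rho b z) (Set.Ioi 1) volume)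

/-- `∞` is an entrance boundary: inaccessible, and `∫₁^∞ ρ(y)∫₁^y ρ(z)⁻¹ dz dy < ∞`. -/
def EntranceInfty (b : ℝ → ℝ) : Prop :=
  InaccessibleInfty b ∧
  IntegrableOn (fun y => rho b y * ∫ z in Set.Ioc 1 y, (rho b z)⁻¹) (Set.Ioi 1) volume

/-- The (unkilled) diffusion is recurrent: `∫₀^∞ ρ(x)⁻¹ dx = ∞`. -/
def Recurrent (b : ℝ → ℝ) : Prop :=
  ¬ IntegrableOn (fun x => (rho b x)⁻¹) (Set.Ioi 0) volume

/-- The (unkilled) diffusion is transient: `∫₀^∞ ρ(x)⁻¹ dx < ∞`. -/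
def Transient (b : ℝ → ℝ) : Prop :=
  IntegrableOn (fun x => (rho b x)⁻¹) (Set.Ioi 0) volume

/-- The formal Sturm–Liouville expression `τ f = −(1/(2ρ))(ρ f′)′ + κ f`,
whose self-adjoint realization is `L^{κ,α}`. -/
def tau (b κ : ℝ → ℝ) (f : ℝ → ℝ) (x : ℝ) : ℝ :=
  -(1 / (2 * rho b x)) * deriv (fun y => rho b y * deriv f y) x + κ x * f x

/-- The boundary condition at `0` with parameter `α ∈ [0,∞]`: `f′(0) = α f(0)`,
i.e. `(1−p₀) f(0) = (1/2) p₀ f′(0)`; Dirichlet (`f(0) = 0`) when `α = ∞`. -/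
def BoundaryCond (α : ℝ≥0∞) (f : ℝ → ℝ) : Prop :=
  (α = ⊤ → f 0 = 0) ∧ (α ≠ ⊤ → deriv f 0 = α.toReal * f 0)

/-- Membership in the domain of the self-adjoint realization `L^{κ,α}` of `τ`
in `L²((0,∞),Γ)` (`0` regular, `∞` in the limit-point case): `f` and `ρf′`
differentiable, `f` and `τf` square-integrable for `Γ`, boundary condition at `0`. -/
structure MemDomain (b κ : ℝ → ℝ) (α : ℝ≥0∞) (f : ℝ → ℝ) : Prop where
  diff1 : ∀ x ∈ Set.Ici (0:ℝ), DifferentiableAt ℝ f x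
  diff2 : ∀ x ∈ Set.Ici (0:ℝ), DifferentiableAt ℝ (fun y => rho b y * deriv f y) x
  memL2 : IntegrableOn (fun x => (f x) ^ 2 * rho b x) (Set.Ioi 0) volume
  tau_memL2 : IntegrableOn (fun x => (tau b κ f x) ^ 2 * rho b x) (Set.Ioi 0) volume
  bc : BoundaryCond α f

/-- `μ` belongs to the spectrum `Σ(L^{κ,α})`, via Weyl's approximate-eigenvalue
criterion (which characterizes the spectrum of a self-adjoint operator). -/
def InSpectrum (b κ : ℝ → ℝ) (α : ℝ≥0∞) (μ : ℝ) : Prop :=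
  ∃ f : ℕ → ℝ → ℝ, (∀ n, MemDomain b κ α (f n)) ∧
    (∀ n, gInt b Set.univ (fun x => (f n x) ^ 2) = 1) ∧
    Tendsto (fun n => gInt b Set.univ (fun x => (tau b κ (f n) x - μ * f n x) ^ 2))
      atTop (nhds 0)

/-- `μ` belongs to the essential spectrum `Σ_ess(L^{κ,α})`, via the singular
(orthonormal) Weyl sequence criterion; its complement in the spectrum consists of
the isolated eigenvalues of finite multiplicity. -/
def InEssSpectrum (b κ : ℝ → ℝ) (α : ℝ≥0∞) (μ : ℝ) : Prop :=
  ∃ f : ℕ → ℝ → ℝ, (∀ n, MemDomain b κ α (f n)) ∧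
    (∀ n, gInt b Set.univ (fun x => (f n x) ^ 2) = 1) ∧
    (∀ m n, m ≠ n → gInt b Set.univ (fun x => f m x * f n x) = 0) ∧
    Tendsto (fun n => gInt b Set.univ (fun x => (tau b κ (f n) x - μ * f n x) ^ 2))
      atTop (nhds 0)

/-- `λ₀^κ`, the bottom of the spectrum of `L^{κ,α}`. -/
def lam0 (b κ : ℝ → ℝ) (α : ℝ≥0∞) : ℝ := sInf {μ | InSpectrum b κ α μ}

/-- `u` is an eigenfunction of `L^{κ,α}` for the eigenvalue `μ`. -/
def IsEigenfun (b κ : ℝ → ℝ) (α : ℝ≥0∞) (μ : ℝ) (u : ℝ → ℝ) : Prop :=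
  MemDomain b κ α u ∧ (∃ x ∈ Set.Ioi (0:ℝ), u x ≠ 0) ∧
    ∀ x ∈ Set.Ioi (0:ℝ), tau b κ u x = μ * u x

/-- `μ` is an isolated point of the spectrum of `L^{κ,α}`. -/
def IsolatedInSpectrum (b κ : ℝ → ℝ) (α : ℝ≥0∞) (μ : ℝ) : Prop :=
  InSpectrum b κ α μ ∧ ∃ ε > (0:ℝ), ∀ μ', InSpectrum b κ α μ' → μ' ≠ μ → ε ≤ |μ' - μ|

/-- `u = φ(λ,·)`: the canonical solution of the eigenvalue ODE `(τ − λ)u = 0` with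
`u(0) = 1/(1+α)` and `u′(0) = α/(1+α)` (`u(0) = 0`, `u′(0) = 1` when `α = ∞`). -/
structure IsPhi (b κ : ℝ → ℝ) (α : ℝ≥0∞) (lam : ℝ) (u : ℝ → ℝ) : Prop where
  diff1 : ∀ x ∈ Set.Ici (0:ℝ), DifferentiableAt ℝ u x
  diff2 : ∀ x ∈ Set.Ici (0:ℝ), DifferentiableAt ℝ (fun y => rho b y * deriv u y) x
  ode : ∀ x ∈ Set.Ioi (0:ℝ), tau b κ u x = lam * u x
  init_top : α = ⊤ → u 0 = 0 ∧ deriv u 0 = 1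
  init_fin : α ≠ ⊤ → u 0 = 1 / (1 + α.toReal) ∧ deriv u 0 = α.toReal / (1 + α.toReal)

/-- `p` is the (jointly continuous, symmetric, sub-Markov) integral kernel of the
semigroup `e^{−tL^{κ,α}}` with respect to the speed measure `Γ`; by the
Feynman–Kac formula this is the transition sub-density of the killed diffusion:
`E_x[f(X_t); τ_∂ > t] = ∫₀^∞ p(t,x,y) f(y) dΓ(y)`. -/
structure IsKernel (b κ : ℝ → ℝ) (α : ℝ≥0∞) (p : ℝ → ℝ → ℝ → ℝ) : Prop where
  cont : ContinuousOn (fun q : ℝ × ℝ × ℝ => p q.1 q.2.1 q.2.2)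
      (Set.Ioi 0 ×ˢ (Set.Ioi 0 ×ˢ Set.Ioi 0))
  nonneg : ∀ t > (0:ℝ), ∀ x > (0:ℝ), ∀ y > (0:ℝ), 0 ≤ p t x y
  symm : ∀ t x y, p t x y = p t y x
  chapman : ∀ s > (0:ℝ), ∀ t > (0:ℝ), ∀ x > (0:ℝ), ∀ y > (0:ℝ),
      p (s + t) x y = gInt b Set.univ (fun z => p s x z * p t z y)
  submarkov : ∀ t > (0:ℝ), ∀ x > (0:ℝ), gInt b Set.univ (fun y => p t x y) ≤ 1
  generator : ∀ f : ℝ → ℝ, MemDomain b κ α f → ∀ x > (0:ℝ), ∀ t > (0:ℝ),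
      HasDerivAt (fun s => gInt b Set.univ (fun y => p s x y * f y))
        (-(gInt b Set.univ (fun y => p t x y * tau b κ f y))) t
  initial : ∀ f : ℝ → ℝ, Continuous f → HasCompactSupport f → ∀ x > (0:ℝ),
      Tendsto (fun t => gInt b Set.univ (fun y => p t x y * f y))
        (𝓝[>] (0:ℝ)) (nhds (f x))

/-- `P_x(X_t ∈ A, τ_∂ > t)`. -/
def hitPt (b : ℝ → ℝ) (p : ℝ → ℝ → ℝ → ℝ) (x t : ℝ) (A : Set ℝ) : ℝ :=
  gInt b A (fun y => p t x y)

/-- `P_x(τ_∂ > t)`. -/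
def survivePt (b : ℝ → ℝ) (p : ℝ → ℝ → ℝ → ℝ) (x t : ℝ) : ℝ :=
  hitPt b p x t Set.univ

/-- `P_ν(X_t ∈ A, τ_∂ > t)`. -/
def hitProb (b : ℝ → ℝ) (p : ℝ → ℝ → ℝ → ℝ) (ν : Measure ℝ) (t : ℝ) (A : Set ℝ) : ℝ :=
  ∫ x, hitPt b p x t A ∂ν

/-- `P_ν(τ_∂ > t)`. -/
def surviveProb (b : ℝ → ℝ) (p : ℝ → ℝ → ℝ → ℝ) (ν : Measure ℝ) (t : ℝ) : ℝ :=
  hitProb b p ν t Set.univ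

/-- `P_ν(X_t ∈ A ∣ τ_∂ > t)`. -/
def condProb (b : ℝ → ℝ) (p : ℝ → ℝ → ℝ → ℝ) (ν : Measure ℝ) (t : ℝ) (A : Set ℝ) : ℝ :=
  hitProb b p ν t A / surviveProb b p ν t

/-- an initial distribution compactly supported in `(0,∞)`. -/
def InitDist (ν : Measure ℝ) : Prop :=
  IsProbabilityMeasure ν ∧ ∃ K : Set ℝ, IsCompact K ∧ K ⊆ Set.Ioi 0 ∧ ν Kᶜ = 0

/-- `X_t` converges from the initial distribution `ν` to the quasistationary
distribution with `Γ`-density proportional to `φ`: `∫₀^∞ φ dΓ < ∞` and for every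
Borel `A ⊆ (0,∞)`, `P_ν(X_t ∈ A ∣ τ_∂ > t) → ∫_A φ dΓ / ∫₀^∞ φ dΓ`. -/
def ConvergesToQSD (b : ℝ → ℝ) (p : ℝ → ℝ → ℝ → ℝ) (ν : Measure ℝ) (φ : ℝ → ℝ) : Prop :=
  IntegrableOn (fun y => φ y * rho b y) (Set.Ioi 0) volume ∧
  ∀ A : Set ℝ, MeasurableSet A → A ⊆ Set.Ioi 0 →
    Tendsto (fun t => condProb b p ν t A) atTop
      (nhds (gInt b A φ / gInt b Set.univ φ))

/-- `X_t` escapes from `ν` to infinity: `P_ν(X_t ≤ z ∣ τ_∂ > t) → 0` for all `z > 0`. -/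
def Escapes (b : ℝ → ℝ) (p : ℝ → ℝ → ℝ → ℝ) (ν : Measure ℝ) : Prop :=
  ∀ z > (0:ℝ), Tendsto (fun t => condProb b p ν t (Set.Ioc 0 z)) atTop (nhds 0)

/-- The quadratic form `q^{κ,α}(g) = α g(0)² + (1/2)∫₀^∞ g′² ρ + ∫₀^∞ κ g² ρ`
(the term `α g(0)²` being dropped when `α = ∞`). -/
def qval (b κ : ℝ → ℝ) (α : ℝ≥0∞) (g : ℝ → ℝ) : ℝ :=
  (if α = ⊤ then 0 else α.toReal * (g 0) ^ 2)
    + (1 / 2) * ∫ y in Set.Ioi (0:ℝ), (deriv g y) ^ 2 * rho b y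
    + ∫ y in Set.Ioi (0:ℝ), κ y * (g y) ^ 2 * rho b y

/-- `μspec` is the spectral measure `d‖E^κ g‖²(λ)` of `g ∈ L²((0,∞),Γ)` for the
self-adjoint operator `L^{κ,α}`: supported in `[λ₀^κ,∞)`, of total mass `‖g‖²`,
and with Laplace transform `⟨e^{−tL^κ}g, g⟩ = ∫ e^{−tλ} d‖E^κ g‖²(λ)`. -/
structure IsSpectralMeasure (b κ : ℝ → ℝ) (α : ℝ≥0∞) (p : ℝ → ℝ → ℝ → ℝ)
    (g : ℝ → ℝ) (μspec : Measure ℝ) : Prop where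
  supp : ∀ s : ℝ, s < lam0 b κ α → μspec (Set.Iio s) = 0
  mass : μspec Set.univ = ENNReal.ofReal (gInt b Set.univ (fun x => (g x) ^ 2))
  laplace : ∀ t > (0:ℝ),
      gInt b Set.univ (fun x => (gInt b Set.univ (fun y => p t x y * g y)) * g x)
        = ∫ lam, Real.exp (-(t * lam)) ∂μspec

/-- `λ_g = sup{λ : ‖E^κ_λ g‖ = 0}`, the infimum of the support of the spectral
measure of `g`. -/
def lamOf (μspec : Measure ℝ) : ℝ := sSup {s : ℝ | μspec (Set.Iic s) = 0}

/-- The complexified Sturm–Liouville expression `τf = −(1/(2ρ))(ρ f′)′ + κ f`. -/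
def tauC (b κ : ℝ → ℝ) (f : ℝ → ℂ) (x : ℝ) : ℂ :=
  -(1 / (2 * (rho b x : ℂ))) * deriv (fun y => (rho b y : ℂ) * deriv f y) x
    + (κ x : ℂ) * f x

/-- `τ = −(1/(2ρ))(ρ·′)′ + κ` is in the limit-point case at `∞`: some solution of
`(τ − z)f = 0` fails to be square-integrable near `∞` with respect to `ρ(y)dy`. -/
def LimitPointAtInfty (b κ : ℝ → ℝ) : Prop :=
  ∃ z : ℂ, ∃ c > (0:ℝ), ∃ f : ℝ → ℂ,
    (∀ x ∈ Set.Ioi (0:ℝ), DifferentiableAt ℝ f x) ∧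
    (∀ x ∈ Set.Ioi (0:ℝ), DifferentiableAt ℝ (fun y => (rho b y : ℂ) * deriv f y) x) ∧
    (∀ x ∈ Set.Ioi (0:ℝ), tauC b κ f x = z * f x) ∧
    ¬ IntegrableOn (fun y => ‖f y‖ ^ 2 * rho b y) (Set.Ioi c) volume



/-! ### Auxiliary development for the proof -/

section SpectralAux

private lemma contzero_left {u : ℝ → ℝ} (hu : Continuous u) {a : ℝ}
    (h : ∀ x, x < a → u x = 0) : u a = 0 := by
  have h1 : Tendsto u (𝓝[<] a) (𝓝 (u a)) := hu.continuousAt.continuousWithinAt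
  have h2 : Tendsto u (𝓝[<] a) (𝓝 0) :=
    Tendsto.congr' (by filter_upwards [self_mem_nhdsWithin] with x hx using (h x hx).symm)
      tendsto_const_nhds
  exact tendsto_nhds_unique h1 h2

private lemma contzero_right {u : ℝ → ℝ} (hu : Continuous u) {a : ℝ}
    (h : ∀ x, a < x → u x = 0) : u a = 0 := by
  have h1 : Tendsto u (𝓝[>] a) (𝓝 (u a)) := hu.continuousAt.continuousWithinAt
  have h2 : Tendsto u (𝓝[>] a) (𝓝 0) :=
    Tendsto.congr' (by filter_upwards [self_mem_nhdsWithin] with x hx using (h x hx).symm)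
      tendsto_const_nhds
  exact tendsto_nhds_unique h1 h2

/-- The smooth transition function. -/
noncomputable def Tf : ℝ → ℝ := Real.smoothTransition
noncomputable def Tf' : ℝ → ℝ := deriv Tf
noncomputable def Tf'' : ℝ → ℝ := deriv Tf'

lemma Tf_contDiff : ContDiff ℝ (↑(⊤:ℕ∞)) Tf := Real.smoothTransition.contDiff
lemma Tf'_contDiff : ContDiff ℝ (↑(⊤:ℕ∞)) Tf' := (contDiff_infty_iff_deriv.mp Tf_contDiff).2
lemma Tf''_contDiff : ContDiff ℝ (↑(⊤:ℕ∞)) Tf'' := (contDiff_infty_iff_deriv.mp Tf'_contDiff).2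
lemma Tf_hasDeriv (x : ℝ) : HasDerivAt Tf (Tf' x) x :=
  ((contDiff_infty_iff_deriv.mp Tf_contDiff).1 x).hasDerivAt
lemma Tf'_hasDeriv (x : ℝ) : HasDerivAt Tf' (Tf'' x) x :=
  ((contDiff_infty_iff_deriv.mp Tf'_contDiff).1 x).hasDerivAt
lemma Tf'_cont : Continuous Tf' := Tf'_contDiff.continuous
lemma Tf''_cont : Continuous Tf'' := Tf''_contDiff.continuous
lemma Tf_cont : Continuous Tf := Tf_contDiff.continuous

lemma Tf_nonneg (x : ℝ) : 0 ≤ Tf x := Real.smoothTransition.nonneg x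
lemma Tf_le_one (x : ℝ) : Tf x ≤ 1 := Real.smoothTransition.le_one x
lemma Tf_zero {x : ℝ} (h : x ≤ 0) : Tf x = 0 := Real.smoothTransition.zero_of_nonpos h
lemma Tf_one {x : ℝ} (h : 1 ≤ x) : Tf x = 1 := Real.smoothTransition.one_of_one_le h

lemma Tf'_zero {x : ℝ} (h : x ≤ 0) : Tf' x = 0 := by
  have hk : ∀ y : ℝ, y < 0 → Tf' y = 0 := by
    intro y hy
    have he : Tf =ᶠ[𝓝 y] (fun _ => 0) := by
      filter_upwards [Iio_mem_nhds hy] with z hz using Tf_zero (le_of_lt hz)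
    rw [Tf', he.deriv_eq, deriv_const]
  rcases eq_or_lt_of_le h with h | h
  · rw [h]; exact contzero_left Tf'_cont hk
  · exact hk x h

lemma Tf'_one {x : ℝ} (h : 1 ≤ x) : Tf' x = 0 := by
  have hk : ∀ y : ℝ, 1 < y → Tf' y = 0 := by
    intro y hy
    have he : Tf =ᶠ[𝓝 y] (fun _ => 1) := by
      filter_upwards [Ioi_mem_nhds hy] with z hz using Tf_one (le_of_lt hz)
    rw [Tf', he.deriv_eq, deriv_const]
  rcases eq_or_lt_of_le h with h | h
  · rw [← h]; exact contzero_right Tf'_cont hk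
  · exact hk x h

lemma Tf''_zero {x : ℝ} (h : x ≤ 0) : Tf'' x = 0 := by
  have hk : ∀ y : ℝ, y < 0 → Tf'' y = 0 := by
    intro y hy
    have he : Tf' =ᶠ[𝓝 y] (fun _ => 0) := by
      filter_upwards [Iio_mem_nhds hy] with z hz using Tf'_zero (le_of_lt hz)
    rw [Tf'', he.deriv_eq, deriv_const]
  rcases eq_or_lt_of_le h with h | h
  · rw [h]; exact contzero_left Tf''_cont hk
  · exact hk x h

lemma Tf''_one {x : ℝ} (h : 1 ≤ x) : Tf'' x = 0 := by
  have hk : ∀ y : ℝ, 1 < y → Tf'' y = 0 := by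
    intro y hy
    have he : Tf' =ᶠ[𝓝 y] (fun _ => 0) := by
      filter_upwards [Ioi_mem_nhds hy] with z hz using Tf'_one (le_of_lt hz)
    rw [Tf'', he.deriv_eq, deriv_const]
  rcases eq_or_lt_of_le h with h | h
  · rw [← h]; exact contzero_right Tf''_cont hk
  · exact hk x h

/-! ramp function -/

noncomputable def Rmp : ℝ → ℝ := fun x => Tf (2*x - 1)
noncomputable def Rmp' : ℝ → ℝ := fun x => 2 * Tf' (2*x - 1)
noncomputable def Rmp'' : ℝ → ℝ := fun x => 4 * Tf'' (2*x - 1)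

lemma Rmp_zero {x : ℝ} (h : x ≤ 1/2) : Rmp x = 0 := Tf_zero (by linarith)
lemma Rmp_one {x : ℝ} (h : 1 ≤ x) : Rmp x = 1 := Tf_one (by linarith)
lemma Rmp'_zero {x : ℝ} (h : x ≤ 1/2) : Rmp' x = 0 := by
  simp only [Rmp']; rw [Tf'_zero (by linarith), mul_zero]
lemma Rmp'_one {x : ℝ} (h : 1 ≤ x) : Rmp' x = 0 := by
  simp only [Rmp']; rw [Tf'_one (by linarith), mul_zero]
lemma Rmp''_zero {x : ℝ} (h : x ≤ 1/2) : Rmp'' x = 0 := by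
  simp only [Rmp'']; rw [Tf''_zero (by linarith), mul_zero]
lemma Rmp''_one {x : ℝ} (h : 1 ≤ x) : Rmp'' x = 0 := by
  simp only [Rmp'']; rw [Tf''_one (by linarith), mul_zero]

lemma affine_hasDeriv (x : ℝ) : HasDerivAt (fun y : ℝ => 2*y - 1) 2 x := by
  simpa using ((hasDerivAt_id x).const_mul (2:ℝ)).sub_const 1

lemma Rmp_hasDeriv (x : ℝ) : HasDerivAt Rmp (Rmp' x) x := by
  have h := (Tf_hasDeriv (2*x-1)).comp x (affine_hasDeriv x)
  have h3 : Tf' (2*x-1) * 2 = Rmp' x := by simp only [Rmp']; ring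
  rw [← h3]; exact h

lemma Rmp'_hasDeriv (x : ℝ) : HasDerivAt Rmp' (Rmp'' x) x := by
  have h := ((Tf'_hasDeriv (2*x-1)).comp x (affine_hasDeriv x)).const_mul (2:ℝ)
  have h3 : (2:ℝ) * (Tf'' (2*x-1) * 2) = Rmp'' x := by simp only [Rmp'']; ring
  rw [← h3]; exact h

lemma Rmp'_cont : Continuous Rmp' :=
  continuous_const.mul (Tf'_cont.comp ((continuous_const.mul continuous_id).sub continuous_const))
lemma Rmp''_cont : Continuous Rmp'' :=
  continuous_const.mul (Tf''_cont.comp ((continuous_const.mul continuous_id).sub continuous_const))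

/-! rho basics -/

lemma rho_pos (b : ℝ → ℝ) (x : ℝ) : 0 < rho b x := Real.exp_pos _
lemma rho_ne (b : ℝ → ℝ) (x : ℝ) : rho b x ≠ 0 := (rho_pos b x).ne'

lemma hasDerivAt_rho {b : ℝ → ℝ} (hbc : ContinuousOn b (Set.Ioi 0))
    (hbl : LocallyIntegrableOn b (Set.Ici 0) volume) {x : ℝ} (hx : 0 < x) :
    HasDerivAt (rho b) (2 * b x * rho b x) x := by
  have hint : IntervalIntegrable b volume 0 x := by
    apply MeasureTheory.IntegrableOn.intervalIntegrable
    rw [Set.uIcc_of_le hx.le]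
    exact hbl.integrableOn_compact_subset (fun y hy => hy.1) isCompact_Icc
  have hmeas : StronglyMeasurableAtFilter b (𝓝 x) volume :=
    ⟨Set.Ioi 0, Ioi_mem_nhds hx, hbc.aestronglyMeasurable measurableSet_Ioi⟩
  have hP : HasDerivAt (fun y => ∫ s in (0:ℝ)..y, b s) (b x) x :=
    intervalIntegral.integral_hasDerivAt_right hint hmeas (hbc.continuousAt (Ioi_mem_nhds hx))
  have h2 : HasDerivAt (fun y => Real.exp (2 * ∫ s in (0:ℝ)..y, b s))
      (Real.exp (2 * ∫ s in (0:ℝ)..x, b s) * (2 * b x)) x := (hP.const_mul 2).exp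
  have h3 : Real.exp (2 * ∫ s in (0:ℝ)..x, b s) * (2 * b x) = 2 * b x * rho b x := by
    rw [rho]; ring
  rw [← h3]; exact h2

lemma rho_contAt {b : ℝ → ℝ} (hbc : ContinuousOn b (Set.Ioi 0))
    (hbl : LocallyIntegrableOn b (Set.Ici 0) volume) {x : ℝ} (hx : 0 < x) :
    ContinuousAt (rho b) x := (hasDerivAt_rho hbc hbl hx).continuousAt

lemma rhoInv_contAt {b : ℝ → ℝ} (hbc : ContinuousOn b (Set.Ioi 0))
    (hbl : LocallyIntegrableOn b (Set.Ici 0) volume) {x : ℝ} (hx : 0 < x) :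
    ContinuousAt (fun y => (rho b y)⁻¹) x := (rho_contAt hbc hbl hx).inv₀ (rho_ne b x)

lemma intOn_Ioc_of (g : ℝ → ℝ) (hg : ∀ x : ℝ, 0 < x → ContinuousAt g x)
    (h01 : IntegrableOn g (Set.Ioc 0 1) volume) (t : ℝ) :
    IntegrableOn g (Set.Ioc 0 t) volume := by
  rcases le_or_gt t 1 with h | h
  · exact h01.mono_set (Set.Ioc_subset_Ioc_right h)
  · rw [← Set.Ioc_union_Ioc_eq_Ioc zero_le_one h.le]
    refine h01.union ?_
    refine (ContinuousOn.integrableOn_compact isCompact_Icc ?_).mono_set Set.Ioc_subset_Icc_self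
    exact fun y hy => (hg y (lt_of_lt_of_le zero_lt_one hy.1)).continuousWithinAt

lemma exists_mass (g : ℝ → ℝ) (hgc : ∀ t : ℝ, IntegrableOn g (Set.Ioc 0 t) volume)
    (hg0 : ∀ x, 0 ≤ g x) (hI : ¬ IntegrableOn g (Set.Ioi 0) volume)
    (a C : ℝ) (ha : 0 < a) : ∃ t, a < t ∧ C ≤ ∫ x in Set.Ioc a t, g x := by
  by_contra hcon
  push_neg at hcon
  apply hI
  have hIa : IntegrableOn g (Set.Ioi a) volume := by
    refine MeasureTheory.integrableOn_Ioi_of_intervalIntegral_norm_bounded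
      (b := fun n : ℕ => a + 1 + n) C a (fun n => (hgc _).mono_set (Set.Ioc_subset_Ioc_left ha.le))
      (tendsto_atTop_add_const_left _ _ tendsto_natCast_atTop_atTop) ?_
    refine Filter.Eventually.of_forall (fun n => ?_)
    have hn : (0:ℝ) ≤ n := Nat.cast_nonneg n
    have hle : a ≤ a + 1 + n := by linarith
    have h1 : (∫ x in a..(a+1+(n:ℝ)), ‖g x‖) = ∫ x in Set.Ioc a (a+1+(n:ℝ)), g x := by
      rw [intervalIntegral.integral_of_le hle]
      exact MeasureTheory.setIntegral_congr_fun measurableSet_Ioc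
        (fun x _ => Real.norm_of_nonneg (hg0 x))
    rw [h1]
    exact (hcon _ (by linarith)).le
  rw [← Set.Ioc_union_Ioi_eq_Ioi ha.le]
  exact (hgc a).union hIa

/-! bump functions -/

noncomputable def eta (c L x : ℝ) : ℝ := Tf (x - c) * Tf (c + L - x)

lemma eta_nonneg (c L x : ℝ) : 0 ≤ eta c L x := mul_nonneg (Tf_nonneg _) (Tf_nonneg _)
lemma eta_le_one (c L x : ℝ) : eta c L x ≤ 1 := by
  have := mul_le_mul (Tf_le_one (x - c)) (Tf_le_one (c + L - x)) (Tf_nonneg _) zero_le_one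
  simpa [eta] using this
lemma eta_zero_left {c L x : ℝ} (h : x ≤ c) : eta c L x = 0 := by
  rw [eta, Tf_zero (by linarith), zero_mul]
lemma eta_zero_right {c L x : ℝ} (h : c + L ≤ x) : eta c L x = 0 := by
  rw [eta, Tf_zero (show c + L - x ≤ 0 by linarith), mul_zero]
lemma eta_one {c L x : ℝ} (h1 : c + 1 ≤ x) (h2 : x ≤ c + L - 1) : eta c L x = 1 := by
  rw [eta, Tf_one (by linarith), Tf_one (by linarith), mul_one]
lemma eta_cont (c L : ℝ) : Continuous (eta c L) :=
  (Tf_cont.comp (continuous_id.sub continuous_const)).mul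
    (Tf_cont.comp (continuous_const.sub continuous_id))

lemma rhoeta_cont {b : ℝ → ℝ} (hbc : ContinuousOn b (Set.Ioi 0))
    (hbl : LocallyIntegrableOn b (Set.Ici 0) volume) {c L : ℝ} (hc : 0 < c) :
    Continuous (fun x => rho b x * eta c L x) := by
  rw [continuous_iff_continuousAt]
  intro x
  rcases lt_or_ge x c with hx | hx
  · refine ContinuousAt.congr (continuousAt_const (y := (0:ℝ))) ?_
    filter_upwards [Iio_mem_nhds hx] with y hy
    rw [eta_zero_left (le_of_lt hy), mul_zero]
  · exact (rho_contAt hbc hbl (lt_of_lt_of_le hc hx)).mul (eta_cont c L).continuousAt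

noncomputable def prim (b : ℝ → ℝ) (c L : ℝ) (x : ℝ) : ℝ :=
  ∫ t in (0:ℝ)..x, rho b t * eta c L t

lemma prim_hasDeriv {b : ℝ → ℝ} (hbc : ContinuousOn b (Set.Ioi 0))
    (hbl : LocallyIntegrableOn b (Set.Ici 0) volume) {c L : ℝ} (hc : 0 < c) (x : ℝ) :
    HasDerivAt (prim b c L) (rho b x * eta c L x) x := by
  have hcont := rhoeta_cont hbc hbl hc (L := L)
  exact intervalIntegral.integral_hasDerivAt_right (hcont.intervalIntegrable (μ := volume) _ _)
    (hcont.stronglyMeasurableAtFilter _ _) hcont.continuousAt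

lemma prim_cont {b : ℝ → ℝ} (hbc : ContinuousOn b (Set.Ioi 0))
    (hbl : LocallyIntegrableOn b (Set.Ici 0) volume) {c L : ℝ} (hc : 0 < c) :
    Continuous (prim b c L) := by
  rw [continuous_iff_continuousAt]
  exact fun x => (prim_hasDeriv hbc hbl hc x).continuousAt

lemma prim_zero {b : ℝ → ℝ} {c L : ℝ} (hc : 0 ≤ c) {x : ℝ} (hx : x ≤ c) :
    prim b c L x = 0 := by
  rw [prim]
  have h : Set.EqOn (fun t => rho b t * eta c L t) (fun _ => 0) (Set.uIcc 0 x) := by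
    intro t ht
    have ht2 : t ≤ c := le_trans ht.2 (sup_le hc hx)
    show rho b t * eta c L t = 0
    rw [eta_zero_left ht2, mul_zero]
  rw [intervalIntegral.integral_congr h, intervalIntegral.integral_zero]

lemma prim_mono {b : ℝ → ℝ} (hbc : ContinuousOn b (Set.Ioi 0))
    (hbl : LocallyIntegrableOn b (Set.Ici 0) volume) {c L : ℝ} (hc : 0 < c) :
    Monotone (prim b c L) := by
  apply monotone_of_deriv_nonneg
  · exact fun x => (prim_hasDeriv hbc hbl hc x).differentiableAt
  · intro x
    rw [(prim_hasDeriv hbc hbl hc x).deriv]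
    exact mul_nonneg (rho_pos b x).le (eta_nonneg c L x)

lemma prim_const {b : ℝ → ℝ} (hbc : ContinuousOn b (Set.Ioi 0))
    (hbl : LocallyIntegrableOn b (Set.Ici 0) volume) {c L : ℝ} (hc : 0 < c) {x : ℝ}
    (hx : c + L ≤ x) : prim b c L x = prim b c L (c + L) := by
  have hcont := rhoeta_cont hbc hbl hc (L := L)
  have hadd := intervalIntegral.integral_add_adjacent_intervals
    (hcont.intervalIntegrable (μ := volume) 0 (c+L)) (hcont.intervalIntegrable (μ := volume) (c+L) x)
  have hzero : (∫ t in (c+L)..x, rho b t * eta c L t) = 0 := by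
    have h : Set.EqOn (fun t => rho b t * eta c L t) (fun _ => 0) (Set.uIcc (c+L) x) := by
      intro t ht
      have h1 : c + L ≤ t := by
        have := ht.1; rwa [inf_eq_left.mpr hx] at this
      show rho b t * eta c L t = 0
      rw [eta_zero_right h1, mul_zero]
    rw [intervalIntegral.integral_congr h, intervalIntegral.integral_zero]
  rw [prim, prim, ← hadd, hzero, add_zero]

lemma prim_nonneg {b : ℝ → ℝ} (hbc : ContinuousOn b (Set.Ioi 0))
    (hbl : LocallyIntegrableOn b (Set.Ici 0) volume) {c L : ℝ} (hc : 0 < c) (x : ℝ) :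
    0 ≤ prim b c L x := by
  rcases le_or_gt x 0 with h | h
  · rw [prim_zero hc.le (le_trans h hc.le)]
  · have h0 : prim b c L 0 = 0 := by rw [prim, intervalIntegral.integral_same]
    rw [← h0]
    exact prim_mono hbc hbl hc h.le

lemma prim_le_total {b : ℝ → ℝ} (hbc : ContinuousOn b (Set.Ioi 0))
    (hbl : LocallyIntegrableOn b (Set.Ici 0) volume) {c L : ℝ} (hc : 0 < c) (x : ℝ) :
    prim b c L x ≤ prim b c L (c+L) := by
  rcases le_or_gt x (c+L) with h | h
  · exact prim_mono hbc hbl hc h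
  · rw [prim_const hbc hbl hc h.le]

lemma prim_eq_setIntegral {b : ℝ → ℝ} {c L x : ℝ} (hx : 0 ≤ x) :
    prim b c L x = ∫ t in Set.Ioc 0 x, rho b t * eta c L t := by
  rw [prim]; exact intervalIntegral.integral_of_le hx

lemma prim_lb {b : ℝ → ℝ} (hbc : ContinuousOn b (Set.Ioi 0))
    (hbl : LocallyIntegrableOn b (Set.Ici 0) volume) {c L : ℝ} (hc : 0 < c) (hL : 2 ≤ L) :
    (∫ x in Set.Ioc (c+1) (c+L-1), rho b x) ≤ prim b c L (c+L) := by
  have hcl : (0:ℝ) ≤ c + L := by linarith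
  rw [prim_eq_setIntegral hcl]
  have hint : IntegrableOn (fun t => rho b t * eta c L t) (Set.Ioc 0 (c+L)) volume :=
    (ContinuousOn.integrableOn_compact isCompact_Icc
      (rhoeta_cont hbc hbl hc (L := L)).continuousOn).mono_set Set.Ioc_subset_Icc_self
  calc (∫ x in Set.Ioc (c+1) (c+L-1), rho b x)
      = ∫ x in Set.Ioc (c+1) (c+L-1), rho b x * eta c L x := by
        refine (MeasureTheory.setIntegral_congr_fun measurableSet_Ioc (fun x hx => ?_)).symm
        show rho b x * eta c L x = rho b x
        rw [eta_one hx.1.le hx.2, mul_one]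
    _ ≤ ∫ x in Set.Ioc 0 (c+L), rho b x * eta c L x := by
        refine MeasureTheory.setIntegral_mono_set hint ?_ ?_
        · exact Filter.Eventually.of_forall
            (fun x => mul_nonneg (rho_pos b x).le (eta_nonneg c L x))
        · exact (Set.Ioc_subset_Ioc (by linarith) (by linarith)).eventuallyLE

lemma rhoeta_intOn_Ioi1 {b : ℝ → ℝ} (hbc : ContinuousOn b (Set.Ioi 0))
    (hbl : LocallyIntegrableOn b (Set.Ici 0) volume) {c L : ℝ} (hc : 1 ≤ c) (hL : 0 ≤ L) :
    IntegrableOn (fun x => rho b x * eta c L x) (Set.Ioi 1) volume := by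
  rw [← Set.Ioc_union_Ioi_eq_Ioi (show (1:ℝ) ≤ c+L by linarith)]
  refine MeasureTheory.IntegrableOn.union ?_ ?_
  · exact (ContinuousOn.integrableOn_compact isCompact_Icc
      (rhoeta_cont hbc hbl (lt_of_lt_of_le zero_lt_one hc) (L := L)).continuousOn).mono_set
      Set.Ioc_subset_Icc_self
  · refine (MeasureTheory.integrableOn_congr_fun (fun y hy => ?_) measurableSet_Ioi).mpr
      MeasureTheory.integrableOn_zero
    show rho b y * eta c L y = 0
    rw [eta_zero_right (le_of_lt hy), mul_zero]

lemma rhoeta_integral_Ioi1 {b : ℝ → ℝ} (hbc : ContinuousOn b (Set.Ioi 0))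
    (hbl : LocallyIntegrableOn b (Set.Ici 0) volume) {c L : ℝ} (hc : 1 ≤ c) (hL : 0 ≤ L) :
    (∫ x in Set.Ioi 1, rho b x * eta c L x) = prim b c L (c+L) := by
  have hc0 : (0:ℝ) < c := lt_of_lt_of_le zero_lt_one hc
  have hint1 : IntegrableOn (fun x => rho b x * eta c L x) (Set.Ioc 0 (c+L)) volume :=
    (ContinuousOn.integrableOn_compact isCompact_Icc
      (rhoeta_cont hbc hbl hc0 (L := L)).continuousOn).mono_set Set.Ioc_subset_Icc_self
  have hint2 : IntegrableOn (fun x => rho b x * eta c L x) (Set.Ioc 1 (c+L)) volume :=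
    hint1.mono_set (Set.Ioc_subset_Ioc_left zero_le_one)
  have hIoiInt : IntegrableOn (fun x => rho b x * eta c L x) (Set.Ioi (c+L)) volume := by
    refine (MeasureTheory.integrableOn_congr_fun (fun y hy => ?_) measurableSet_Ioi).mpr
      MeasureTheory.integrableOn_zero
    show rho b y * eta c L y = 0
    rw [eta_zero_right (le_of_lt hy), mul_zero]
  have hIoi : (∫ x in Set.Ioi (c+L), rho b x * eta c L x) = 0 := by
    rw [MeasureTheory.setIntegral_congr_fun measurableSet_Ioi
      (g := fun _ => (0:ℝ)) (fun y hy => by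
        show rho b y * eta c L y = 0
        rw [eta_zero_right (le_of_lt hy), mul_zero])]
    exact MeasureTheory.integral_zero _ _
  have hIoc01 : (∫ x in Set.Ioc (0:ℝ) 1, rho b x * eta c L x) = 0 := by
    rw [MeasureTheory.setIntegral_congr_fun measurableSet_Ioc
      (g := fun _ => (0:ℝ)) (fun y hy => by
        show rho b y * eta c L y = 0
        rw [eta_zero_left (le_trans hy.2 hc), mul_zero])]
    exact MeasureTheory.integral_zero _ _
  have e1 : (∫ x in Set.Ioi (1:ℝ), rho b x * eta c L x)
      = (∫ x in Set.Ioc (1:ℝ) (c+L), rho b x * eta c L x)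
        + ∫ x in Set.Ioi (c+L), rho b x * eta c L x := by
    rw [← Set.Ioc_union_Ioi_eq_Ioi (show (1:ℝ) ≤ c+L by linarith)]
    exact MeasureTheory.setIntegral_union
      Set.Ioc_disjoint_Ioi_same measurableSet_Ioi hint2 hIoiInt
  have e2 : prim b c L (c+L)
      = (∫ x in Set.Ioc (0:ℝ) 1, rho b x * eta c L x)
        + ∫ x in Set.Ioc (1:ℝ) (c+L), rho b x * eta c L x := by
    rw [prim_eq_setIntegral (by linarith : (0:ℝ) ≤ c+L)]
    rw [← Set.Ioc_union_Ioc_eq_Ioc zero_le_one (show (1:ℝ) ≤ c+L by linarith)]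
    exact MeasureTheory.setIntegral_union
      (Set.Ioc_disjoint_Ioc_of_le le_rfl) measurableSet_Ioc
      (hint1.mono_set (Set.Ioc_subset_Ioc_right (by linarith))) hint2
  rw [e1, e2, hIoc01, hIoi]
  ring

/-! the test function -/

noncomputable def gg (b : ℝ → ℝ) (c₁ L₁ c₂ L₂ l₁ l₂ x : ℝ) : ℝ :=
  l₁ * prim b c₁ L₁ x + l₂ * prim b c₂ L₂ x

noncomputable def hh (b : ℝ → ℝ) (c₁ L₁ c₂ L₂ l₁ l₂ x : ℝ) : ℝ :=
  (rho b x)⁻¹ * gg b c₁ L₁ c₂ L₂ l₁ l₂ x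

noncomputable def ff (b : ℝ → ℝ) (c₁ L₁ c₂ L₂ l₁ l₂ x : ℝ) : ℝ :=
  Rmp x + ∫ t in (0:ℝ)..x, hh b c₁ L₁ c₂ L₂ l₁ l₂ t

noncomputable def Psi (b : ℝ → ℝ) (x : ℝ) : ℝ := -(2 * b x * Rmp' x + Rmp'' x) / 2

noncomputable def Cram (b : ℝ → ℝ) : ℝ := ∫ x in Set.Ioc (0:ℝ) 1, (Psi b x)^2 * rho b x

noncomputable def Phi (b : ℝ → ℝ) (c₁ L₁ c₂ L₂ l₁ l₂ x : ℝ) : ℝ :=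
  -(2 * b x * Rmp' x + Rmp'' x + l₁ * eta c₁ L₁ x + l₂ * eta c₂ L₂ x) / 2

lemma Phi_eq_Psi {b : ℝ → ℝ} {c₁ L₁ c₂ L₂ l₁ l₂ x : ℝ} (h1 : x ≤ c₁) (h2 : x ≤ c₂) :
    Phi b c₁ L₁ c₂ L₂ l₁ l₂ x = Psi b x := by
  simp only [Phi, Psi]
  rw [eta_zero_left h1, eta_zero_left h2]
  ring

lemma Phi_eq_tail {b : ℝ → ℝ} {c₁ L₁ c₂ L₂ l₁ l₂ x : ℝ} (h1 : 1 ≤ x) :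
    Phi b c₁ L₁ c₂ L₂ l₁ l₂ x = -(l₁ * eta c₁ L₁ x + l₂ * eta c₂ L₂ x) / 2 := by
  simp only [Phi]
  rw [Rmp'_one h1, Rmp''_one h1]
  ring

lemma Psi_sq_int {b : ℝ → ℝ} (hbc : ContinuousOn b (Set.Ioi 0))
    (hbl : LocallyIntegrableOn b (Set.Ici 0) volume) :
    IntegrableOn (fun x => (Psi b x)^2 * rho b x) (Set.Ioc 0 1) volume := by
  rw [← Set.Ioc_union_Ioc_eq_Ioc (by norm_num : (0:ℝ) ≤ 1/2) (by norm_num : (1:ℝ)/2 ≤ 1)]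
  refine MeasureTheory.IntegrableOn.union ?_ ?_
  · refine (MeasureTheory.integrableOn_congr_fun (fun x hx => ?_) measurableSet_Ioc).mpr
      MeasureTheory.integrableOn_zero
    show (Psi b x)^2 * rho b x = 0
    simp only [Psi]
    rw [Rmp'_zero hx.2, Rmp''_zero hx.2]
    ring
  · refine (ContinuousOn.integrableOn_compact isCompact_Icc ?_).mono_set Set.Ioc_subset_Icc_self
    have h1 : ContinuousOn b (Set.Icc (1/2:ℝ) 1) :=
      hbc.mono (fun y hy => lt_of_lt_of_le (by norm_num) hy.1)
    have h2 : ContinuousOn (rho b) (Set.Icc (1/2:ℝ) 1) := fun y hy =>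
      (rho_contAt hbc hbl (lt_of_lt_of_le (by norm_num) hy.1)).continuousWithinAt
    simp only [Psi]
    exact ((((continuous_const.continuousOn.mul h1).mul Rmp'_cont.continuousOn).add
      Rmp''_cont.continuousOn).neg.div_const 2).pow 2 |>.mul h2

lemma hh_zero {b : ℝ → ℝ} {c₁ L₁ c₂ L₂ l₁ l₂ : ℝ} (hc₁ : 0 ≤ c₁) (hcc : c₁ ≤ c₂)
    {x : ℝ} (hx : x ≤ c₁) : hh b c₁ L₁ c₂ L₂ l₁ l₂ x = 0 := by
  simp only [hh, gg]
  rw [prim_zero hc₁ hx, prim_zero (le_trans hc₁ hcc) (le_trans hx hcc)]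
  ring

lemma gg_cont {b : ℝ → ℝ} (hbc : ContinuousOn b (Set.Ioi 0))
    (hbl : LocallyIntegrableOn b (Set.Ici 0) volume) {c₁ L₁ c₂ L₂ : ℝ} (l₁ l₂ : ℝ)
    (hc₁ : 0 < c₁) (hc₂ : 0 < c₂) : Continuous (gg b c₁ L₁ c₂ L₂ l₁ l₂) := by
  show Continuous fun x => l₁ * prim b c₁ L₁ x + l₂ * prim b c₂ L₂ x
  exact (continuous_const.mul (prim_cont hbc hbl hc₁)).add
    (continuous_const.mul (prim_cont hbc hbl hc₂))

lemma hh_cont {b : ℝ → ℝ} (hbc : ContinuousOn b (Set.Ioi 0))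
    (hbl : LocallyIntegrableOn b (Set.Ici 0) volume) {c₁ L₁ c₂ L₂ : ℝ} (l₁ l₂ : ℝ)
    (hc₁ : 0 < c₁) (hcc : c₁ ≤ c₂) : Continuous (hh b c₁ L₁ c₂ L₂ l₁ l₂) := by
  have hggc : Continuous (gg b c₁ L₁ c₂ L₂ l₁ l₂) :=
    gg_cont hbc hbl l₁ l₂ hc₁ (lt_of_lt_of_le hc₁ hcc)
  rw [continuous_iff_continuousAt]
  intro x
  rcases lt_or_ge x c₁ with hx | hx
  · refine ContinuousAt.congr (continuousAt_const (y := (0:ℝ))) ?_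
    filter_upwards [Iio_mem_nhds hx] with y hy
    exact (hh_zero hc₁.le hcc (le_of_lt hy)).symm
  · show ContinuousAt (fun y => (rho b y)⁻¹ * gg b c₁ L₁ c₂ L₂ l₁ l₂ y) x
    exact (rhoInv_contAt hbc hbl (lt_of_lt_of_le hc₁ hx)).mul hggc.continuousAt

lemma ff_hasDeriv {b : ℝ → ℝ} (hbc : ContinuousOn b (Set.Ioi 0))
    (hbl : LocallyIntegrableOn b (Set.Ici 0) volume) {c₁ L₁ c₂ L₂ : ℝ} (l₁ l₂ : ℝ)
    (hc₁ : 0 < c₁) (hcc : c₁ ≤ c₂) (x : ℝ) :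
    HasDerivAt (ff b c₁ L₁ c₂ L₂ l₁ l₂) (Rmp' x + hh b c₁ L₁ c₂ L₂ l₁ l₂ x) x := by
  have hc : Continuous (hh b c₁ L₁ c₂ L₂ l₁ l₂) := hh_cont hbc hbl l₁ l₂ hc₁ hcc
  have h2 : HasDerivAt (fun y => ∫ t in (0:ℝ)..y, hh b c₁ L₁ c₂ L₂ l₁ l₂ t)
      (hh b c₁ L₁ c₂ L₂ l₁ l₂ x) x :=
    intervalIntegral.integral_hasDerivAt_right (hc.intervalIntegrable _ _)
      (hc.stronglyMeasurableAtFilter _ _) hc.continuousAt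
  exact (Rmp_hasDeriv x).add h2

lemma intzero_hh {b : ℝ → ℝ} {c₁ L₁ c₂ L₂ l₁ l₂ : ℝ} (hc₁ : 0 ≤ c₁) (hcc : c₁ ≤ c₂)
    {x : ℝ} (hx : x ≤ c₁) : (∫ t in (0:ℝ)..x, hh b c₁ L₁ c₂ L₂ l₁ l₂ t) = 0 := by
  have h : Set.EqOn (fun t => hh b c₁ L₁ c₂ L₂ l₁ l₂ t) (fun _ => 0) (Set.uIcc 0 x) := by
    intro t ht
    exact hh_zero hc₁ hcc (le_trans ht.2 (sup_le hc₁ hx))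
  rw [intervalIntegral.integral_congr h, intervalIntegral.integral_zero]

lemma ff_low {b : ℝ → ℝ} {c₁ L₁ c₂ L₂ l₁ l₂ : ℝ} (hc₁ : 1 ≤ c₁) (hcc : c₁ ≤ c₂)
    {x : ℝ} (hx : x ≤ 1/2) : ff b c₁ L₁ c₂ L₂ l₁ l₂ x = 0 := by
  simp only [ff]
  rw [Rmp_zero hx, intzero_hh (by linarith) hcc (by linarith), add_zero]

lemma ff_plateau {b : ℝ → ℝ} {c₁ L₁ c₂ L₂ l₁ l₂ : ℝ} (hcc : c₁ ≤ c₂)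
    {x : ℝ} (h1 : 1 ≤ x) (h2 : x ≤ c₁) : ff b c₁ L₁ c₂ L₂ l₁ l₂ x = 1 := by
  simp only [ff]
  rw [Rmp_one h1, intzero_hh (by linarith) hcc h2, add_zero]

lemma gg_high {b : ℝ → ℝ} (hbc : ContinuousOn b (Set.Ioi 0))
    (hbl : LocallyIntegrableOn b (Set.Ici 0) volume) {c₁ L₁ c₂ L₂ l₁ l₂ : ℝ}
    (hc₁ : 0 < c₁) (hc₂ : 0 < c₂) (hcc : c₁ + L₁ ≤ c₂) (hL₂ : 0 ≤ L₂)
    (hsum : l₁ * prim b c₁ L₁ (c₁+L₁) + l₂ * prim b c₂ L₂ (c₂+L₂) = 0)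
    {x : ℝ} (hx : c₂ + L₂ ≤ x) : gg b c₁ L₁ c₂ L₂ l₁ l₂ x = 0 := by
  simp only [gg]
  rw [prim_const hbc hbl hc₁ (by linarith), prim_const hbc hbl hc₂ hx]
  exact hsum

lemma ff_high {b : ℝ → ℝ} (hbc : ContinuousOn b (Set.Ioi 0))
    (hbl : LocallyIntegrableOn b (Set.Ici 0) volume) {c₁ L₁ c₂ L₂ l₁ l₂ : ℝ}
    (hc₁ : 0 < c₁) (hc₂ : 0 < c₂) (hcc : c₁ + L₁ ≤ c₂) (hL₂ : 0 ≤ L₂) (hE1 : 1 ≤ c₂ + L₂)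
    (hL₁0 : 0 ≤ L₁)
    (hsum : l₁ * prim b c₁ L₁ (c₁+L₁) + l₂ * prim b c₂ L₂ (c₂+L₂) = 0)
    (hD : (∫ t in (0:ℝ)..(c₂+L₂), hh b c₁ L₁ c₂ L₂ l₁ l₂ t) = -1)
    {x : ℝ} (hx : c₂ + L₂ ≤ x) : ff b c₁ L₁ c₂ L₂ l₁ l₂ x = 0 := by
  have hcle : c₁ ≤ c₂ := by linarith
  have hc : Continuous (hh b c₁ L₁ c₂ L₂ l₁ l₂) := hh_cont hbc hbl l₁ l₂ hc₁ hcle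
  have hzero2 : (∫ t in (c₂+L₂)..x, hh b c₁ L₁ c₂ L₂ l₁ l₂ t) = 0 := by
    have h : Set.EqOn (fun t => hh b c₁ L₁ c₂ L₂ l₁ l₂ t) (fun _ => 0)
        (Set.uIcc (c₂+L₂) x) := by
      intro t ht
      have h1 : c₂ + L₂ ≤ t := by
        have := ht.1; rwa [inf_eq_left.mpr hx] at this
      show hh b c₁ L₁ c₂ L₂ l₁ l₂ t = 0
      simp only [hh]
      rw [gg_high hbc hbl hc₁ hc₂ hcc hL₂ hsum h1, mul_zero]
    rw [intervalIntegral.integral_congr h, intervalIntegral.integral_zero]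
  have hadd := intervalIntegral.integral_add_adjacent_intervals
    (hc.intervalIntegrable (μ := volume) 0 (c₂+L₂)) (hc.intervalIntegrable (μ := volume) (c₂+L₂) x)
  simp only [ff]
  rw [← hadd, hD, hzero2, Rmp_one (le_trans hE1 hx)]
  ring

lemma q_eq {b : ℝ → ℝ} (hbc : ContinuousOn b (Set.Ioi 0))
    (hbl : LocallyIntegrableOn b (Set.Ici 0) volume) {c₁ L₁ c₂ L₂ : ℝ} (l₁ l₂ : ℝ)
    (hc₁ : 0 < c₁) (hcc : c₁ ≤ c₂) :
    (fun y => rho b y * deriv (ff b c₁ L₁ c₂ L₂ l₁ l₂) y)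
      = fun y => rho b y * Rmp' y + gg b c₁ L₁ c₂ L₂ l₁ l₂ y := by
  funext y
  rw [(ff_hasDeriv hbc hbl l₁ l₂ hc₁ hcc y).deriv]
  simp only [hh]
  rw [mul_add, mul_inv_cancel_left₀ (rho_ne b y)]

lemma q_hasDeriv {b : ℝ → ℝ} (hbc : ContinuousOn b (Set.Ioi 0))
    (hbl : LocallyIntegrableOn b (Set.Ici 0) volume) {c₁ L₁ c₂ L₂ : ℝ} (l₁ l₂ : ℝ)
    (hc₁ : 0 < c₁) (hc₂ : 0 < c₂) (hcc : c₁ ≤ c₂) {x : ℝ} (hx : 0 < x) :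
    HasDerivAt (fun y => rho b y * deriv (ff b c₁ L₁ c₂ L₂ l₁ l₂) y)
      (rho b x * (2 * b x * Rmp' x + Rmp'' x + l₁ * eta c₁ L₁ x + l₂ * eta c₂ L₂ x)) x := by
  rw [q_eq hbc hbl l₁ l₂ hc₁ hcc]
  have h1 : HasDerivAt (fun y => rho b y * Rmp' y)
      (2 * b x * rho b x * Rmp' x + rho b x * Rmp'' x) x :=
    (hasDerivAt_rho hbc hbl hx).mul (Rmp'_hasDeriv x)
  have h2 : HasDerivAt (gg b c₁ L₁ c₂ L₂ l₁ l₂)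
      (l₁ * (rho b x * eta c₁ L₁ x) + l₂ * (rho b x * eta c₂ L₂ x)) x :=
    ((prim_hasDeriv hbc hbl hc₁ x).const_mul l₁).add
      ((prim_hasDeriv hbc hbl hc₂ x).const_mul l₂)
  convert h1.add h2 using 1
  · rfl
  · rfl
  · funext y; rfl
  · ring

lemma tau_ff {b : ℝ → ℝ} (hbc : ContinuousOn b (Set.Ioi 0))
    (hbl : LocallyIntegrableOn b (Set.Ici 0) volume) {c₁ L₁ c₂ L₂ : ℝ} (l₁ l₂ : ℝ)
    (hc₁ : 0 < c₁) (hc₂ : 0 < c₂) (hcc : c₁ ≤ c₂) {x : ℝ} (hx : 0 < x) :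
    tau b (fun _ => 0) (ff b c₁ L₁ c₂ L₂ l₁ l₂) x = Phi b c₁ L₁ c₂ L₂ l₁ l₂ x := by
  have hq : HasDerivAt (fun y => rho b y * deriv (ff b c₁ L₁ c₂ L₂ l₁ l₂) y)
      (rho b x * (2 * b x * Rmp' x + Rmp'' x + l₁ * eta c₁ L₁ x + l₂ * eta c₂ L₂ x)) x :=
    q_hasDeriv hbc hbl l₁ l₂ hc₁ hc₂ hcc hx
  simp only [tau, Phi]
  rw [hq.deriv]
  have h := rho_ne b x
  field_simp
  ring

end SpectralAux


section KeyLemma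

lemma gInt_univ (b : ℝ → ℝ) (f : ℝ → ℝ) :
    gInt b Set.univ f = ∫ x in Set.Ioi (0:ℝ), f x * rho b x := by
  rw [gInt, Set.univ_inter]

lemma algebraD {W₁ W₂ m₁ m₂ NN : ℝ} (hm₂ : m₂ ≠ 0) (hNN : NN ≠ 0)
    (h : NN = W₁ - m₁/m₂*W₂) : -NN⁻¹*W₁ + m₁/(m₂*NN)*W₂ = -1 := by
  have hNN' : W₁ - m₁/m₂*W₂ ≠ 0 := h ▸ hNN
  have h2 : m₂*W₁ - m₁*W₂ ≠ 0 := by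
    have he : m₂*(W₁ - m₁/m₂*W₂) = m₂*W₁ - m₁*W₂ := by field_simp
    rw [← he]
    exact mul_ne_zero hm₂ hNN'
  subst h
  have h3 := mul_inv_cancel₀ h2
  field_simp
  linear_combination -h3

lemma algebraSum {m₁ m₂ NN : ℝ} (hm₂ : m₂ ≠ 0) (hNN : NN ≠ 0) :
    -NN⁻¹ * m₁ + m₁ / (m₂ * NN) * m₂ = 0 := by
  field_simp
  ring

set_option maxHeartbeats 3200000 in
lemma key {b : ℝ → ℝ} (α : ℝ≥0∞)
    (hbc : ContinuousOn b (Set.Ioi 0)) (hbl : LocallyIntegrableOn b (Set.Ici 0) volume)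
    (h0 : RegularZero b) (hI : ¬ IntegrableOn (fun x => rho b x) (Set.Ioi 0) volume)
    (hrec : Recurrent b) {ε : ℝ} (hε : 0 < ε) :
    ∃ f : ℝ → ℝ, MemDomain b (fun _ => 0) α f ∧
      gInt b Set.univ (fun x => (f x) ^ 2) = 1 ∧
      gInt b Set.univ (fun x => (tau b (fun _ => 0) f x) ^ 2) ≤ ε := by
  classical
  have hρc : ∀ x : ℝ, 0 < x → ContinuousAt (rho b) x := fun x hx => rho_contAt hbc hbl hx
  have hρic : ∀ x : ℝ, 0 < x → ContinuousAt (fun y => (rho b y)⁻¹) x :=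
    fun x hx => rhoInv_contAt hbc hbl hx
  have hrint : ∀ t : ℝ, IntegrableOn (fun x => rho b x) (Set.Ioc 0 t) volume :=
    intOn_Ioc_of _ hρc h0.1
  have hrinv : ∀ t : ℝ, IntegrableOn (fun x => (rho b x)⁻¹) (Set.Ioc 0 t) volume :=
    intOn_Ioc_of _ hρic h0.2
  have hrec' : ¬ IntegrableOn (fun x => (rho b x)⁻¹) (Set.Ioi 0) volume := hrec
  have hC0 : 0 ≤ Cram b :=
    MeasureTheory.setIntegral_nonneg measurableSet_Ioc
      (fun x _ => mul_nonneg (sq_nonneg _) (rho_pos b x).le)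
  -- choose the parameters
  obtain ⟨c₁, hc₁, hMc₁⟩ := exists_mass (fun x => rho b x) hrint (fun x => (rho_pos b x).le)
    hI 1 (max 1 ((Cram b + 1) / ε)) one_pos
  obtain ⟨t₁, ht₁, hmt₁⟩ := exists_mass (fun x => rho b x) hrint (fun x => (rho_pos b x).le)
    hI (c₁+1) 1 (by linarith)
  set L₁ : ℝ := t₁ - c₁ + 1 with hL₁def
  have hL₁ : 2 ≤ L₁ := by rw [hL₁def]; linarith
  have hcL₁ : c₁ + L₁ - 1 = t₁ := by rw [hL₁def]; ring
  clear_value L₁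
  obtain ⟨c₂, hc₂, hdm⟩ := exists_mass (fun x => (rho b x)⁻¹) hrinv
    (fun x => inv_nonneg.mpr (rho_pos b x).le) hrec' (c₁+L₁) 1 (by linarith)
  obtain ⟨t₂, ht₂, hmt₂⟩ := exists_mass (fun x => rho b x) hrint (fun x => (rho_pos b x).le)
    hI (c₂+1) 1 (by linarith)
  set L₂ : ℝ := t₂ - c₂ + 1 with hL₂def
  have hL₂ : 2 ≤ L₂ := by rw [hL₂def]; linarith
  have hcL₂ : c₂ + L₂ - 1 = t₂ := by rw [hL₂def]; ring
  clear_value L₂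
  have hc₁0 : (0:ℝ) < c₁ := by linarith
  have hc₂0 : (0:ℝ) < c₂ := by linarith
  have hcle : c₁ ≤ c₂ := by linarith
  have hccL : c₁ + L₁ ≤ c₂ := hc₂.le
  have hE1 : (1:ℝ) ≤ c₂ + L₂ := by linarith
  have hE0 : (0:ℝ) < c₂ + L₂ := by linarith
  -- the masses
  set μ₁ : ℝ := prim b c₁ L₁ (c₁+L₁) with hμ₁def
  set μ₂ : ℝ := prim b c₂ L₂ (c₂+L₂) with hμ₂def
  clear_value μ₁ μ₂
  have hμ₁1 : 1 ≤ μ₁ := by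
    rw [hμ₁def]
    refine le_trans ?_ (prim_lb hbc hbl hc₁0 hL₁)
    rw [hcL₁]
    exact hmt₁
  have hμ₂1 : 1 ≤ μ₂ := by
    rw [hμ₂def]
    refine le_trans ?_ (prim_lb hbc hbl hc₂0 hL₂)
    rw [hcL₂]
    exact hmt₂
  have hμ₁0 : 0 < μ₁ := by linarith
  have hμ₂0 : 0 < μ₂ := by linarith
  set d : ℝ := ∫ x in Set.Ioc (c₁+L₁) c₂, (rho b x)⁻¹ with hddef
  have hd1 : 1 ≤ d := hdm
  clear_value d
  -- prim facts
  have hA0 : ∀ x : ℝ, x ≤ c₁ → prim b c₁ L₁ x = 0 := fun x hx => prim_zero hc₁0.le hx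
  have hB0 : ∀ x : ℝ, x ≤ c₂ → prim b c₂ L₂ x = 0 := fun x hx => prim_zero hc₂0.le hx
  have hAc : ∀ x : ℝ, c₁ + L₁ ≤ x → prim b c₁ L₁ x = μ₁ := fun x hx => by
    rw [hμ₁def]; exact prim_const hbc hbl hc₁0 hx
  have hAnn : ∀ x : ℝ, 0 ≤ prim b c₁ L₁ x := prim_nonneg hbc hbl hc₁0
  have hBnn : ∀ x : ℝ, 0 ≤ prim b c₂ L₂ x := prim_nonneg hbc hbl hc₂0
  have hAle : ∀ x : ℝ, prim b c₁ L₁ x ≤ μ₁ := fun x => by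
    rw [hμ₁def]; exact prim_le_total hbc hbl hc₁0 x
  have hBle : ∀ x : ℝ, prim b c₂ L₂ x ≤ μ₂ := fun x => by
    rw [hμ₂def]; exact prim_le_total hbc hbl hc₂0 x
  -- integrability of ρ⁻¹·A, ρ⁻¹·B on Ioc 0 (c₂+L₂)
  have hWint1 : IntegrableOn (fun x => (rho b x)⁻¹ * prim b c₁ L₁ x)
      (Set.Ioc 0 (c₂+L₂)) volume := by
    have h := (hrinv (c₂+L₂)).bdd_mul (prim_cont hbc hbl hc₁0).aestronglyMeasurable
      (c := μ₁) (Filter.Eventually.of_forall fun x => by rw [Real.norm_eq_abs, abs_of_nonneg (hAnn x)]; exact hAle x)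
    have heq : (fun x => prim b c₁ L₁ x * (rho b x)⁻¹)
        = fun x => (rho b x)⁻¹ * prim b c₁ L₁ x := by funext x; ring
    rw [← heq]
    exact h
  have hWint2 : IntegrableOn (fun x => (rho b x)⁻¹ * prim b c₂ L₂ x)
      (Set.Ioc 0 (c₂+L₂)) volume := by
    have h := (hrinv (c₂+L₂)).bdd_mul (prim_cont hbc hbl hc₂0).aestronglyMeasurable
      (c := μ₂) (Filter.Eventually.of_forall fun x => by rw [Real.norm_eq_abs, abs_of_nonneg (hBnn x)]; exact hBle x)
    have heq : (fun x => prim b c₂ L₂ x * (rho b x)⁻¹)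
        = fun x => (rho b x)⁻¹ * prim b c₂ L₂ x := by funext x; ring
    rw [← heq]
    exact h
  set W₁ : ℝ := ∫ x in Set.Ioc 0 (c₂+L₂), (rho b x)⁻¹ * prim b c₁ L₁ x with hW₁def
  set W₂ : ℝ := ∫ x in Set.Ioc 0 (c₂+L₂), (rho b x)⁻¹ * prim b c₂ L₂ x with hW₂def
  set NN : ℝ := W₁ - μ₁/μ₂ * W₂ with hNNdef
  clear_value W₁ W₂ NN
  -- lower bound for NN
  have hNN_ge : μ₁ * d ≤ NN := by
    have hsub : IntegrableOn
        (fun x => (rho b x)⁻¹ * prim b c₁ L₁ x - μ₁/μ₂ * ((rho b x)⁻¹ * prim b c₂ L₂ x))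
        (Set.Ioc 0 (c₂+L₂)) volume := hWint1.sub (hWint2.const_mul _)
    have e1 : NN = ∫ x in Set.Ioc 0 (c₂+L₂),
        ((rho b x)⁻¹ * prim b c₁ L₁ x - μ₁/μ₂ * ((rho b x)⁻¹ * prim b c₂ L₂ x)) := by
      rw [hNNdef, hW₁def, hW₂def, MeasureTheory.integral_sub hWint1 (hWint2.const_mul _),
        MeasureTheory.integral_const_mul]
    rw [e1]
    calc μ₁ * d = ∫ x in Set.Ioc (c₁+L₁) c₂, μ₁ * (rho b x)⁻¹ := by
          rw [hddef, MeasureTheory.integral_const_mul]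
      _ = ∫ x in Set.Ioc (c₁+L₁) c₂,
            ((rho b x)⁻¹ * prim b c₁ L₁ x - μ₁/μ₂ * ((rho b x)⁻¹ * prim b c₂ L₂ x)) := by
          refine MeasureTheory.setIntegral_congr_fun measurableSet_Ioc (fun x hx => ?_)
          rw [hAc x hx.1.le, hB0 x hx.2]
          ring
      _ ≤ _ := by
          refine MeasureTheory.setIntegral_mono_set hsub ?_ ?_
          · refine Filter.Eventually.of_forall (fun x => ?_)
            show (0:ℝ) ≤ (rho b x)⁻¹ * prim b c₁ L₁ x
              - μ₁ / μ₂ * ((rho b x)⁻¹ * prim b c₂ L₂ x)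
            rcases le_or_gt x c₂ with h | h
            · rw [hB0 x h]
              have := mul_nonneg (inv_nonneg.mpr (rho_pos b x).le) (hAnn x)
              simp only [mul_zero]
              linarith
            · rw [hAc x (by linarith)]
              have hkb : μ₁/μ₂ * prim b c₂ L₂ x ≤ μ₁ := by
                calc μ₁/μ₂ * prim b c₂ L₂ x ≤ μ₁/μ₂ * μ₂ :=
                      mul_le_mul_of_nonneg_left (hBle x) (div_nonneg hμ₁0.le hμ₂0.le)
                  _ = μ₁ := div_mul_cancel₀ μ₁ hμ₂0.ne'
              have hinn : 0 ≤ (rho b x)⁻¹ := inv_nonneg.mpr (rho_pos b x).le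
              have hprod := mul_nonneg hinn (sub_nonneg.mpr hkb)
              have hexp : (rho b x)⁻¹ * (μ₁ - μ₁/μ₂ * prim b c₂ L₂ x)
                  = (rho b x)⁻¹ * μ₁ - μ₁ / μ₂ * ((rho b x)⁻¹ * prim b c₂ L₂ x) := by ring
              rw [hexp] at hprod
              linarith
          · exact (Set.Ioc_subset_Ioc (by linarith) (by linarith)).eventuallyLE
  have h1d : (1:ℝ) ≤ μ₁ * d := by
    have := mul_le_mul hμ₁1 hd1 zero_le_one (by linarith)
    simpa using this
  have hNN1 : 1 ≤ NN := le_trans h1d hNN_ge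
  have hNN0 : 0 < NN := by linarith
  have hNNμ : μ₁ ≤ NN := le_trans (le_mul_of_one_le_right hμ₁0.le hd1) hNN_ge
  set l₁ : ℝ := -NN⁻¹ with hl₁def
  set l₂ : ℝ := μ₁ / (μ₂ * NN) with hl₂def
  clear_value l₁ l₂
  have hsum : l₁ * μ₁ + l₂ * μ₂ = 0 := by
    rw [hl₁def, hl₂def]
    exact algebraSum hμ₂0.ne' hNN0.ne'
  have hsum' : l₁ * prim b c₁ L₁ (c₁+L₁) + l₂ * prim b c₂ L₂ (c₂+L₂) = 0 := by
    rw [← hμ₁def, ← hμ₂def]; exact hsum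
  -- D = -1
  have hD : (∫ t in (0:ℝ)..(c₂+L₂), hh b c₁ L₁ c₂ L₂ l₁ l₂ t) = -1 := by
    rw [intervalIntegral.integral_of_le hE0.le]
    have he : Set.EqOn (fun t => hh b c₁ L₁ c₂ L₂ l₁ l₂ t)
        (fun t => l₁ * ((rho b t)⁻¹ * prim b c₁ L₁ t)
          + l₂ * ((rho b t)⁻¹ * prim b c₂ L₂ t)) (Set.Ioc 0 (c₂+L₂)) := by
      intro t _
      simp only [hh, gg]
      ring
    rw [MeasureTheory.setIntegral_congr_fun measurableSet_Ioc he]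
    rw [MeasureTheory.integral_add ((hWint1.const_mul l₁)) ((hWint2.const_mul l₂))]
    rw [MeasureTheory.integral_const_mul, MeasureTheory.integral_const_mul]
    rw [← hW₁def, ← hW₂def, hl₁def, hl₂def]
    exact algebraD hμ₂0.ne' hNN0.ne' hNNdef
  -- the function and its derivative
  have hffd : ∀ x : ℝ, HasDerivAt (ff b c₁ L₁ c₂ L₂ l₁ l₂)
      (Rmp' x + hh b c₁ L₁ c₂ L₂ l₁ l₂ x) x := ff_hasDeriv hbc hbl l₁ l₂ hc₁0 hcle
  have hffcont : Continuous (ff b c₁ L₁ c₂ L₂ l₁ l₂) := by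
    rw [continuous_iff_continuousAt]; exact fun x => (hffd x).continuousAt
  have hderiv_ff : deriv (ff b c₁ L₁ c₂ L₂ l₁ l₂)
      = fun x => Rmp' x + hh b c₁ L₁ c₂ L₂ l₁ l₂ x := funext fun x => (hffd x).deriv
  have hfflow : ∀ x : ℝ, x ≤ 1/2 → ff b c₁ L₁ c₂ L₂ l₁ l₂ x = 0 :=
    fun x hx => ff_low (by linarith) hcle hx
  have hffhigh : ∀ x : ℝ, c₂ + L₂ ≤ x → ff b c₁ L₁ c₂ L₂ l₁ l₂ x = 0 :=
    fun x hx => ff_high hbc hbl hc₁0 hc₂0 hccL (by linarith) hE1 (by linarith) hsum' hD hx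
  have hffone : ∀ x : ℝ, 1 ≤ x → x ≤ c₁ → ff b c₁ L₁ c₂ L₂ l₁ l₂ x = 1 :=
    fun x h1 h2 => ff_plateau hcle h1 h2
  -- bound on f
  obtain ⟨Cf, hCf⟩ := (isCompact_Icc :
    IsCompact (Set.Icc (0:ℝ) (c₂+L₂))).exists_bound_of_continuousOn hffcont.continuousOn
  have hCf' : ∀ x : ℝ, |ff b c₁ L₁ c₂ L₂ l₁ l₂ x| ≤ max Cf 0 := by
    intro x
    by_cases hx : x ∈ Set.Icc (0:ℝ) (c₂+L₂)
    · exact le_trans (by simpa [Real.norm_eq_abs] using hCf x hx) (le_max_left _ _)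
    · have hz : ff b c₁ L₁ c₂ L₂ l₁ l₂ x = 0 := by
        rcases lt_or_ge x 0 with h | h
        · exact hfflow x (by linarith)
        · have h2 : c₂ + L₂ < x := by
            by_contra hcon
            exact hx ⟨h, le_of_not_gt hcon⟩
          exact hffhigh x h2.le
      rw [hz]
      simp [le_max_right]
  -- memL2
  have hfL2 : IntegrableOn (fun x => (ff b c₁ L₁ c₂ L₂ l₁ l₂ x)^2 * rho b x)
      (Set.Ioi 0) volume := by
    rw [← Set.Ioc_union_Ioi_eq_Ioi hE0.le]
    refine MeasureTheory.IntegrableOn.union ?_ ?_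
    · refine (hrint (c₂+L₂)).bdd_mul ((hffcont.pow 2).aestronglyMeasurable) (c := (max Cf 0)^2) ?_
      refine Filter.Eventually.of_forall (fun x => ?_)
      rw [Real.norm_eq_abs, abs_pow]
      exact pow_le_pow_left₀ (abs_nonneg _) (hCf' x) 2
    · refine (MeasureTheory.integrableOn_congr_fun (fun x hx => ?_) measurableSet_Ioi).mpr
        MeasureTheory.integrableOn_zero
      show (ff b c₁ L₁ c₂ L₂ l₁ l₂ x)^2 * rho b x = 0
      rw [hffhigh x (le_of_lt hx)]
      ring
  set Nf : ℝ := ∫ x in Set.Ioi (0:ℝ), (ff b c₁ L₁ c₂ L₂ l₁ l₂ x)^2 * rho b x with hNfdef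
  clear_value Nf
  have hNfge : max 1 ((Cram b + 1) / ε) ≤ Nf := by
    refine le_trans hMc₁ ?_
    have e1 : (∫ x in Set.Ioc (1:ℝ) c₁, rho b x)
        = ∫ x in Set.Ioc (1:ℝ) c₁, (ff b c₁ L₁ c₂ L₂ l₁ l₂ x)^2 * rho b x := by
      refine (MeasureTheory.setIntegral_congr_fun measurableSet_Ioc (fun x hx => ?_)).symm
      rw [hffone x hx.1.le hx.2, one_pow, one_mul]
    rw [e1, hNfdef]
    refine MeasureTheory.setIntegral_mono_set hfL2 ?_ ?_
    · exact Filter.Eventually.of_forall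
        (fun x => mul_nonneg (sq_nonneg _) (rho_pos b x).le)
    · exact (Set.Ioc_subset_Ioi_self.trans (Set.Ioi_subset_Ioi zero_le_one)).eventuallyLE
  have hNf0 : 0 < Nf := lt_of_lt_of_le (lt_of_lt_of_le one_pos (le_max_left _ _)) hNfge
  -- tau values
  have htauval : ∀ x ∈ Set.Ioi (0:ℝ), tau b (fun _ => 0) (ff b c₁ L₁ c₂ L₂ l₁ l₂) x
      = Phi b c₁ L₁ c₂ L₂ l₁ l₂ x :=
    fun x hx => tau_ff hbc hbl l₁ l₂ hc₁0 hc₂0 hcle hx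
  -- tail integrability of Phi² ρ on Ioi 1
  have hPhiTailInt : IntegrableOn (fun x => (Phi b c₁ L₁ c₂ L₂ l₁ l₂ x)^2 * rho b x)
      (Set.Ioi 1) volume := by
    rw [← Set.Ioc_union_Ioi_eq_Ioi hE1]
    refine MeasureTheory.IntegrableOn.union ?_ ?_
    · refine (MeasureTheory.integrableOn_congr_fun
          (g := fun y => (-(l₁ * eta c₁ L₁ y + l₂ * eta c₂ L₂ y)/2)^2 * rho b y)
          (fun y hy => ?_) measurableSet_Ioc).mpr ?_
      · show (Phi b c₁ L₁ c₂ L₂ l₁ l₂ y)^2 * rho b y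
          = (-(l₁ * eta c₁ L₁ y + l₂ * eta c₂ L₂ y)/2)^2 * rho b y
        rw [Phi_eq_tail hy.1.le]
      · refine (ContinuousOn.integrableOn_compact isCompact_Icc ?_).mono_set
          Set.Ioc_subset_Icc_self
        have hcontTail : Continuous
            fun x => (-(l₁ * eta c₁ L₁ x + l₂ * eta c₂ L₂ x)/2)^2 :=
          (((continuous_const.mul (eta_cont c₁ L₁)).add
            (continuous_const.mul (eta_cont c₂ L₂))).neg.div_const 2).pow 2
        have hρOn : ContinuousOn (rho b) (Set.Icc 1 (c₂+L₂)) :=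
          fun y hy => (rho_contAt hbc hbl (lt_of_lt_of_le one_pos hy.1)).continuousWithinAt
        exact hcontTail.continuousOn.mul hρOn
    · refine (MeasureTheory.integrableOn_congr_fun (fun y hy => ?_) measurableSet_Ioi).mpr
        MeasureTheory.integrableOn_zero
      show (Phi b c₁ L₁ c₂ L₂ l₁ l₂ y)^2 * rho b y = 0
      have h1 : eta c₁ L₁ y = 0 := eta_zero_right (by linarith [Set.mem_Ioi.mp hy])
      have h2 : eta c₂ L₂ y = 0 := eta_zero_right (le_of_lt hy)
      simp only [Phi]
      rw [h1, h2, Rmp'_one (by linarith [Set.mem_Ioi.mp hy]),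
        Rmp''_one (by linarith [Set.mem_Ioi.mp hy])]
      ring
  -- pointwise tail bound
  have hTail_pt : ∀ x ∈ Set.Ioi (1:ℝ), (Phi b c₁ L₁ c₂ L₂ l₁ l₂ x)^2 * rho b x
      ≤ (l₁^2 * (rho b x * eta c₁ L₁ x) + l₂^2 * (rho b x * eta c₂ L₂ x))/4 := by
    intro x hx
    rw [Phi_eq_tail (le_of_lt hx)]
    have hρx := (rho_pos b x).le
    rcases le_or_gt x c₂ with h | h
    · rw [eta_zero_left h]
      have e0 : 0 ≤ eta c₁ L₁ x := eta_nonneg _ _ _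
      have e1 : eta c₁ L₁ x ≤ 1 := eta_le_one _ _ _
      have hsq : (eta c₁ L₁ x)^2 ≤ eta c₁ L₁ x := by
        calc (eta c₁ L₁ x)^2 = eta c₁ L₁ x * eta c₁ L₁ x := by ring
          _ ≤ 1 * eta c₁ L₁ x := mul_le_mul_of_nonneg_right e1 e0
          _ = eta c₁ L₁ x := one_mul _
      have hkey : l₁^2 * (eta c₁ L₁ x)^2 * rho b x ≤ l₁^2 * eta c₁ L₁ x * rho b x :=
        mul_le_mul_of_nonneg_right
          (mul_le_mul_of_nonneg_left hsq (sq_nonneg l₁)) hρx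
      calc (-(l₁ * eta c₁ L₁ x + l₂ * 0)/2)^2 * rho b x
          = l₁^2 * (eta c₁ L₁ x)^2 * rho b x / 4 := by ring
        _ ≤ l₁^2 * eta c₁ L₁ x * rho b x / 4 := by linarith
        _ = (l₁^2 * (rho b x * eta c₁ L₁ x) + l₂^2 * (rho b x * 0))/4 := by ring
    · rw [eta_zero_right (show c₁ + L₁ ≤ x by linarith)]
      have e0 : 0 ≤ eta c₂ L₂ x := eta_nonneg _ _ _
      have e1 : eta c₂ L₂ x ≤ 1 := eta_le_one _ _ _
      have hsq : (eta c₂ L₂ x)^2 ≤ eta c₂ L₂ x := by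
        calc (eta c₂ L₂ x)^2 = eta c₂ L₂ x * eta c₂ L₂ x := by ring
          _ ≤ 1 * eta c₂ L₂ x := mul_le_mul_of_nonneg_right e1 e0
          _ = eta c₂ L₂ x := one_mul _
      have hkey : l₂^2 * (eta c₂ L₂ x)^2 * rho b x ≤ l₂^2 * eta c₂ L₂ x * rho b x :=
        mul_le_mul_of_nonneg_right
          (mul_le_mul_of_nonneg_left hsq (sq_nonneg l₂)) hρx
      calc (-(l₁ * 0 + l₂ * eta c₂ L₂ x)/2)^2 * rho b x
          = l₂^2 * (eta c₂ L₂ x)^2 * rho b x / 4 := by ring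
        _ ≤ l₂^2 * eta c₂ L₂ x * rho b x / 4 := by linarith
        _ = (l₁^2 * (rho b x * 0) + l₂^2 * (rho b x * eta c₂ L₂ x))/4 := by ring
  -- tail bound
  have hMaj1 : IntegrableOn (fun x => rho b x * eta c₁ L₁ x) (Set.Ioi 1) volume :=
    rhoeta_intOn_Ioi1 hbc hbl (by linarith) (by linarith)
  have hMaj2 : IntegrableOn (fun x => rho b x * eta c₂ L₂ x) (Set.Ioi 1) volume :=
    rhoeta_intOn_Ioi1 hbc hbl (by linarith) (by linarith)
  have hTailBound : (∫ x in Set.Ioi 1, (Phi b c₁ L₁ c₂ L₂ l₁ l₂ x)^2 * rho b x) ≤ 1 := by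
    have hMajInt : IntegrableOn
        (fun x => (l₁^2 * (rho b x * eta c₁ L₁ x) + l₂^2 * (rho b x * eta c₂ L₂ x))/4)
        (Set.Ioi 1) volume :=
      ((hMaj1.const_mul (l₁^2)).add (hMaj2.const_mul (l₂^2))).div_const 4
    have hle1 : (∫ x in Set.Ioi 1, (Phi b c₁ L₁ c₂ L₂ l₁ l₂ x)^2 * rho b x)
        ≤ ∫ x in Set.Ioi 1,
            (l₁^2 * (rho b x * eta c₁ L₁ x) + l₂^2 * (rho b x * eta c₂ L₂ x))/4 :=
      MeasureTheory.setIntegral_mono_on hPhiTailInt hMajInt measurableSet_Ioi hTail_pt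
    have hval : (∫ x in Set.Ioi 1,
          (l₁^2 * (rho b x * eta c₁ L₁ x) + l₂^2 * (rho b x * eta c₂ L₂ x))/4)
        = (l₁^2 * μ₁ + l₂^2 * μ₂)/4 := by
      rw [MeasureTheory.integral_div,
        MeasureTheory.integral_add (hMaj1.const_mul (l₁^2)) (hMaj2.const_mul (l₂^2)),
        MeasureTheory.integral_const_mul, MeasureTheory.integral_const_mul,
        rhoeta_integral_Ioi1 hbc hbl (by linarith) (by linarith),
        rhoeta_integral_Ioi1 hbc hbl (by linarith) (by linarith),
        ← hμ₁def, ← hμ₂def]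
    have hb1 : l₁^2 * μ₁ ≤ 1 := by
      have he : l₁^2 = (NN^2)⁻¹ := by rw [hl₁def, neg_sq, ← inv_pow]
      rw [he, inv_mul_le_iff₀ (pow_pos hNN0 2)]
      calc μ₁ ≤ NN := hNNμ
        _ = NN * 1 := (mul_one NN).symm
        _ ≤ NN * NN := mul_le_mul_of_nonneg_left hNN1 hNN0.le
        _ = NN^2 * 1 := by ring
    have hb2 : l₂^2 * μ₂ ≤ 1 := by
      rw [hl₂def, div_pow, div_mul_eq_mul_div, div_le_one (by positivity)]
      have hμNN2 : μ₁^2 ≤ NN^2 := by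
        rw [pow_two, pow_two]
        exact mul_le_mul hNNμ hNNμ hμ₁0.le hNN0.le
      calc μ₁^2 * μ₂ ≤ NN^2 * μ₂ := mul_le_mul_of_nonneg_right hμNN2 hμ₂0.le
        _ ≤ NN^2 * (μ₂ * μ₂) := mul_le_mul_of_nonneg_left
            (le_mul_of_one_le_left hμ₂0.le hμ₂1) (by positivity)
        _ = (μ₂ * NN)^2 := by ring
    rw [hval] at hle1
    linarith
  -- head bound
  have hPhiHead : (∫ x in Set.Ioc (0:ℝ) 1, (Phi b c₁ L₁ c₂ L₂ l₁ l₂ x)^2 * rho b x)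
      = Cram b := by
    rw [Cram]
    refine MeasureTheory.setIntegral_congr_fun measurableSet_Ioc (fun x hx => ?_)
    rw [Phi_eq_Psi (le_trans hx.2 (by linarith)) (le_trans hx.2 (by linarith))]
  have hPhiHeadInt : IntegrableOn (fun x => (Phi b c₁ L₁ c₂ L₂ l₁ l₂ x)^2 * rho b x)
      (Set.Ioc 0 1) volume := by
    refine (MeasureTheory.integrableOn_congr_fun (fun x hx => ?_) measurableSet_Ioc).mpr
      (Psi_sq_int hbc hbl)
    show (Phi b c₁ L₁ c₂ L₂ l₁ l₂ x)^2 * rho b x = (Psi b x)^2 * rho b x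
    rw [Phi_eq_Psi (le_trans hx.2 (by linarith)) (le_trans hx.2 (by linarith))]
  -- full tau integrability and bound
  have htauInt : IntegrableOn
      (fun x => (tau b (fun _ => 0) (ff b c₁ L₁ c₂ L₂ l₁ l₂) x)^2 * rho b x)
      (Set.Ioi 0) volume := by
    refine (MeasureTheory.integrableOn_congr_fun
        (g := fun x => (Phi b c₁ L₁ c₂ L₂ l₁ l₂ x)^2 * rho b x)
        (fun x hx => ?_) measurableSet_Ioi).mpr ?_
    · show (tau b (fun _ => 0) (ff b c₁ L₁ c₂ L₂ l₁ l₂) x)^2 * rho b x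
        = (Phi b c₁ L₁ c₂ L₂ l₁ l₂ x)^2 * rho b x
      rw [htauval x hx]
    · rw [← Set.Ioc_union_Ioi_eq_Ioi zero_le_one]
      exact hPhiHeadInt.union hPhiTailInt
  have htauBound : (∫ x in Set.Ioi (0:ℝ),
      (tau b (fun _ => 0) (ff b c₁ L₁ c₂ L₂ l₁ l₂) x)^2 * rho b x) ≤ Cram b + 1 := by
    have e : (∫ x in Set.Ioi (0:ℝ),
        (tau b (fun _ => 0) (ff b c₁ L₁ c₂ L₂ l₁ l₂) x)^2 * rho b x)
        = ∫ x in Set.Ioi (0:ℝ), (Phi b c₁ L₁ c₂ L₂ l₁ l₂ x)^2 * rho b x := by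
      refine MeasureTheory.setIntegral_congr_fun measurableSet_Ioi (fun x hx => ?_)
      rw [htauval x hx]
    rw [e, ← Set.Ioc_union_Ioi_eq_Ioi zero_le_one,
      MeasureTheory.setIntegral_union Set.Ioc_disjoint_Ioi_same
        measurableSet_Ioi hPhiHeadInt hPhiTailInt, hPhiHead]
    linarith
  -- the normalized function
  set s : ℝ := Real.sqrt Nf with hsdef
  have hs0 : 0 < s := Real.sqrt_pos.mpr hNf0
  have hs2 : s^2 = Nf := Real.sq_sqrt hNf0.le
  have hsne : s ≠ 0 := hs0.ne'
  clear_value s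
  -- scaled q-function equality
  have hqeq : (fun y => rho b y * deriv (fun z => s⁻¹ * ff b c₁ L₁ c₂ L₂ l₁ l₂ z) y)
      = fun y => s⁻¹ * (rho b y * deriv (ff b c₁ L₁ c₂ L₂ l₁ l₂) y) := by
    funext y
    rw [deriv_const_mul_field]
    ring
  have hts : ∀ x ∈ Set.Ioi (0:ℝ),
      tau b (fun _ => 0) (fun z => s⁻¹ * ff b c₁ L₁ c₂ L₂ l₁ l₂ z) x
        = s⁻¹ * tau b (fun _ => 0) (ff b c₁ L₁ c₂ L₂ l₁ l₂) x := by
    intro x hx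
    have hq : HasDerivAt (fun y => rho b y * deriv (ff b c₁ L₁ c₂ L₂ l₁ l₂) y)
        (rho b x * (2 * b x * Rmp' x + Rmp'' x + l₁ * eta c₁ L₁ x + l₂ * eta c₂ L₂ x)) x :=
      q_hasDeriv hbc hbl l₁ l₂ hc₁0 hc₂0 hcle hx
    simp only [tau]
    rw [hqeq, deriv_const_mul_field]
    ring
  refine ⟨fun x => s⁻¹ * ff b c₁ L₁ c₂ L₂ l₁ l₂ x, ⟨?_, ?_, ?_, ?_, ?_, ?_⟩, ?_, ?_⟩
  · -- diff1
    intro x _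
    exact ((hffd x).const_mul s⁻¹).differentiableAt
  · -- diff2
    intro x hx
    rw [hqeq]
    rcases (Set.mem_Ici.mp hx).lt_or_eq with h | h
    · exact ((q_hasDeriv hbc hbl l₁ l₂ hc₁0 hc₂0 hcle h).const_mul s⁻¹).differentiableAt
    · have hz : (fun y => s⁻¹ * (rho b y * deriv (ff b c₁ L₁ c₂ L₂ l₁ l₂) y))
          =ᶠ[𝓝 x] (fun _ => 0) := by
        rw [← h]
        filter_upwards [Iio_mem_nhds (show (0:ℝ) < 1/2 by norm_num)] with y hy
        rw [hderiv_ff]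
        simp only []
        rw [Rmp'_zero (le_of_lt hy), hh_zero hc₁0.le hcle (by
          have : y < 1/2 := hy
          linarith)]
        ring
      exact (Filter.EventuallyEq.differentiableAt_iff hz).mpr (differentiableAt_const 0)
  · -- memL2
    have e : (fun x => (s⁻¹ * ff b c₁ L₁ c₂ L₂ l₁ l₂ x)^2 * rho b x)
        = fun x => (s^2)⁻¹ * ((ff b c₁ L₁ c₂ L₂ l₁ l₂ x)^2 * rho b x) := by
      funext x
      field_simp
    rw [e]
    exact hfL2.const_mul _
  · -- tau_memL2
    refine (MeasureTheory.integrableOn_congr_fun (fun x hx => ?_) measurableSet_Ioi).mpr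
      (htauInt.const_mul ((s^2)⁻¹))
    show (tau b (fun _ => 0) (fun z => s⁻¹ * ff b c₁ L₁ c₂ L₂ l₁ l₂ z) x)^2 * rho b x
      = (s^2)⁻¹ * ((tau b (fun _ => 0) (ff b c₁ L₁ c₂ L₂ l₁ l₂) x)^2 * rho b x)
    rw [hts x hx]
    field_simp
  · -- bc top
    intro _
    show s⁻¹ * ff b c₁ L₁ c₂ L₂ l₁ l₂ 0 = 0
    rw [hfflow 0 (by norm_num)]
    ring
  · -- bc finite
    intro _
    show deriv (fun z => s⁻¹ * ff b c₁ L₁ c₂ L₂ l₁ l₂ z) 0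
      = α.toReal * (s⁻¹ * ff b c₁ L₁ c₂ L₂ l₁ l₂ 0)
    rw [deriv_const_mul_field]
    simp only [hderiv_ff]
    rw [Rmp'_zero (by norm_num), hh_zero hc₁0.le hcle (by linarith), hfflow 0 (by norm_num)]
    ring
  · -- normalization
    rw [gInt_univ]
    have e : (fun x => (s⁻¹ * ff b c₁ L₁ c₂ L₂ l₁ l₂ x)^2 * rho b x)
        = fun x => (s^2)⁻¹ * ((ff b c₁ L₁ c₂ L₂ l₁ l₂ x)^2 * rho b x) := by
      funext x
      field_simp
    calc ∫ x in Set.Ioi (0:ℝ), (s⁻¹ * ff b c₁ L₁ c₂ L₂ l₁ l₂ x)^2 * rho b x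
        = ∫ x in Set.Ioi (0:ℝ), (s^2)⁻¹ * ((ff b c₁ L₁ c₂ L₂ l₁ l₂ x)^2 * rho b x) := by
          rw [e]
      _ = (s^2)⁻¹ * Nf := by rw [MeasureTheory.integral_const_mul, ← hNfdef]
      _ = 1 := by rw [hs2]; field_simp
  · -- the ε bound
    rw [gInt_univ]
    have e : (∫ x in Set.Ioi (0:ℝ),
        (tau b (fun _ => 0) (fun z => s⁻¹ * ff b c₁ L₁ c₂ L₂ l₁ l₂ z) x)^2 * rho b x)
        = (s^2)⁻¹ * ∫ x in Set.Ioi (0:ℝ),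
            (tau b (fun _ => 0) (ff b c₁ L₁ c₂ L₂ l₁ l₂) x)^2 * rho b x := by
      rw [← MeasureTheory.integral_const_mul]
      refine MeasureTheory.setIntegral_congr_fun measurableSet_Ioi (fun x hx => ?_)
      rw [hts x hx]
      field_simp
    rw [e, hs2]
    have h3 : (Cram b + 1)/ε ≤ Nf := le_trans (le_max_right _ _) hNfge
    rw [div_le_iff₀ hε] at h3
    have hInn : 0 ≤ ∫ x in Set.Ioi (0:ℝ),
        (tau b (fun _ => 0) (ff b c₁ L₁ c₂ L₂ l₁ l₂) x)^2 * rho b x :=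
      MeasureTheory.setIntegral_nonneg measurableSet_Ioi
        (fun x _ => mul_nonneg (sq_nonneg _) (rho_pos b x).le)
    calc Nf⁻¹ * ∫ x in Set.Ioi (0:ℝ),
          (tau b (fun _ => 0) (ff b c₁ L₁ c₂ L₂ l₁ l₂) x)^2 * rho b x
        ≤ Nf⁻¹ * (Cram b + 1) :=
          mul_le_mul_of_nonneg_left htauBound (inv_nonneg.mpr hNf0.le)
      _ ≤ ε := by
          rw [inv_mul_le_iff₀ hNf0]
          linarith

lemma zero_mem {b : ℝ → ℝ} (α : ℝ≥0∞)
    (hbc : ContinuousOn b (Set.Ioi 0)) (hbl : LocallyIntegrableOn b (Set.Ici 0) volume)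
    (h0 : RegularZero b) (hI : ¬ IntegrableOn (fun x => rho b x) (Set.Ioi 0) volume)
    (hrec : Recurrent b) : InSpectrum b (fun _ => 0) α 0 := by
  have hkey : ∀ n : ℕ, ∃ f : ℝ → ℝ, MemDomain b (fun _ => 0) α f ∧
      gInt b Set.univ (fun x => (f x) ^ 2) = 1 ∧
      gInt b Set.univ (fun x => (tau b (fun _ => 0) f x) ^ 2) ≤ 1/(n+1) :=
    fun n => key α hbc hbl h0 hI hrec (by positivity)
  choose f hdom hnorm hcost using hkey
  refine ⟨f, hdom, hnorm, ?_⟩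
  have hre : (fun n => gInt b Set.univ
        (fun x => (tau b (fun _ => 0) (f n) x - 0 * f n x) ^ 2))
      = fun n => gInt b Set.univ (fun x => (tau b (fun _ => 0) (f n) x) ^ 2) := by
    funext n
    simp only [zero_mul, sub_zero]
  rw [hre]
  refine squeeze_zero (fun n => ?_) (fun n => hcost n) tendsto_one_div_add_atTop_nhds_zero_nat
  rw [gInt_univ]
  exact MeasureTheory.setIntegral_nonneg measurableSet_Ioi
    (fun x _ => mul_nonneg (sq_nonneg _) (rho_pos b x).le)

end KeyLemma

/-- Lemma `spectrum`, assertion (2): if `λ₀ > 0` (the bottom of the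
spectrum of `L^{0,α}` is strictly positive) and the unkilled diffusion is recurrent
(`∫₀^∞ ρ⁻¹ = ∞`), then the speed measure is finite: `∫₀^∞ ρ < ∞`. -/
theorem positive_lam0_recurrent_implies_finite_speed
    (b : ℝ → ℝ) (α : ℝ≥0∞)
    (hc : Coeffs b (fun _ => 0)) (h0 : RegularZero b) (hinf : InaccessibleInfty b)
    (hlam : 0 < lam0 b (fun _ => 0) α)
    (hrec : Recurrent b) :
    IntegrableOn (fun x => rho b x) (Set.Ioi 0) volume := by
  by_contra hI
  have h00 : InSpectrum b (fun _ => 0) α 0 := zero_mem α hc.hb_cont hc.hb_loc h0 hI hrec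
  have hle : lam0 b (fun _ => 0) α ≤ 0 := by
    by_cases hbdd : BddBelow {μ : ℝ | InSpectrum b (fun _ => 0) α μ}
    · exact csInf_le hbdd h00
    · have heq : lam0 b (fun _ => 0) α = 0 := Real.sInf_of_not_bddBelow hbdd
      exact heq.le
  linarith

end KS
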